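/- (Chisholm–Everitt Theorem) Let (a,b) be an open interval (bounded or unbounded), let w be Lebesgue measurable and positive a.e. on (a,b), and let φ, ψ : (a,b) → ℂ satisfy: (i) φ, ψ ∈ L²_loc((a,b); w); (ii) there exists c ∈ (a,b) with φ ∈ L²((a,c]; w) and ψ ∈ L²([c,b); w); (iii) for all [α,β] ⊂ (a,b), ∫_α^β |φ|² w dx > 0 and ∫_α^β |ψ|² w dx > 0. Define (Af)(x) = φ(x)∫_x^b ψ(t)f(t)w(t)dt and (Bf)(x) = ψ(x)∫_a^x φ(t)f(t)w(t)dt for f ∈ L²((a,b); w), and set K(x) := (∫_a^x |φ|² w dt)^{1/2}(∫_x^b |ψ|² w dt)^{1/2} and K := sup{K(x) : x ∈ (a,b)}. Then A and B are both bounded operators from L²((a,b); w) into L²((a,b); w) if and only if 0 < K < ∞; moreover, in that case ‖Af‖ ≤ 2K‖f‖ and ‖Bg‖ ≤ 2K‖g‖ for all f, g ∈ L²((a,b); w). -/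

import Mathlib

open MeasureTheory Set Filter ENNReal

noncomputable section

namespace CE

lemma rpow_half_sq (X : ℝ≥0∞) : (X ^ (1/2 : ℝ)) ^ 2 = X := by
  rw [← ENNReal.rpow_natCast (X ^ (1/2:ℝ)) 2, ← ENNReal.rpow_mul]
  norm_num

lemma sq_eq_rpow_two (X : ℝ≥0∞) : X ^ 2 = X ^ (2:ℝ) := by
  rw [← ENNReal.rpow_natCast X 2]; norm_num

lemma vol_lt (c : ℝ≥0∞) : volume {l : ℝ | 0 < l ∧ ENNReal.ofReal l < c} = c := by
  rcases eq_or_ne c ⊤ with rfl | hc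
  · have h : {l : ℝ | 0 < l ∧ ENNReal.ofReal l < ⊤} = Ioi 0 := by
      ext l; simp
    rw [h]; simp
  · have h : {l : ℝ | 0 < l ∧ ENNReal.ofReal l < c} = Ioo 0 c.toReal := by
      ext l
      simp only [mem_setOf_eq, mem_Ioo]
      constructor
      · rintro ⟨h0, hl⟩
        exact ⟨h0, (ENNReal.ofReal_lt_iff_lt_toReal h0.le hc).mp hl⟩
      · rintro ⟨h0, hl⟩
        exact ⟨h0, (ENNReal.ofReal_lt_iff_lt_toReal h0.le hc).mpr hl⟩
    rw [h, Real.volume_Ioo]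
    simp [ENNReal.ofReal_toReal hc]

lemma rpow_half_lt_iff {X y : ℝ≥0∞} : X ^ (1/2:ℝ) < y ↔ X < y ^ (2:ℝ) := by
  have h := ENNReal.rpow_lt_rpow_iff (x := X) (y := y ^ (2:ℝ)) (z := (1/2:ℝ)) (by norm_num)
  rw [← ENNReal.rpow_mul, show (2:ℝ) * (1/2) = 1 by norm_num, ENNReal.rpow_one] at h
  exact h

lemma lt_rpow_neg_half_iff {r X : ℝ≥0∞} :
    r < X ^ (-(1/2):ℝ) ↔ X < r ^ (-2:ℝ) := by
  rw [ENNReal.rpow_neg X, ENNReal.lt_inv_iff_lt_inv, rpow_half_lt_iff,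
    ENNReal.rpow_neg r, ← ENNReal.inv_rpow]

lemma meas_sublevel_Iic (ν : Measure ℝ) (x : ℝ) (c : ℝ≥0∞) :
    ν ({t | ν (Iic t) < c} ∩ Iic x) ≤ c := by
  set S := {t | ν (Iic t) < c} ∩ Iic x with hSdef
  rcases S.eq_empty_or_nonempty with hS | hS
  · rw [hS]; simp
  · have hbdd : BddAbove S := ⟨x, fun t ht => ht.2⟩
    set u := sSup S with hu
    have hSu : ∀ t ∈ S, t ≤ u := fun t ht => le_csSup hbdd ht
    have hlow : ∀ t, t < u → ν (Iic t) < c := by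
      intro t ht
      obtain ⟨t', ht'S, htt'⟩ := exists_lt_of_lt_csSup hS ht
      exact lt_of_le_of_lt (measure_mono (Iic_subset_Iic.mpr htt'.le)) ht'S.1
    by_cases hmem : ν (Iic u) < c
    · exact le_trans (measure_mono (fun t ht => hSu t ht)) hmem.le
    · have hsub : S ⊆ Iio u := by
        intro t ht
        rcases lt_or_eq_of_le (hSu t ht) with h | h
        · exact h
        · exact absurd (h ▸ ht.1) hmem
      refine le_trans (measure_mono hsub) ?_
      have hUnion : Iio u = ⋃ n : ℕ, Iic (u - 1/(n+1)) := by
        ext t; simp only [mem_Iio, mem_iUnion, mem_Iic]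
        constructor
        · intro h
          obtain ⟨n, hn⟩ := exists_nat_one_div_lt (sub_pos.mpr h)
          exact ⟨n, by linarith⟩
        · rintro ⟨n, hn⟩
          have hp : (0:ℝ) < 1/(n+1) := by positivity
          linarith
      have hmono : Monotone fun n : ℕ => Iic (u - 1/(n+1:ℝ)) := by
        intro m n hmn
        apply Iic_subset_Iic.mpr
        have h1 : (1:ℝ)/(n+1) ≤ 1/(m+1) := by
          apply one_div_le_one_div_of_le (by positivity)
          exact_mod_cast by linarith
        linarith
      rw [hUnion, (hmono.directed_le).measure_iUnion]
      refine iSup_le fun n => (hlow _ ?_).le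
      have hp : (0:ℝ) < 1/(n+1) := by positivity
      linarith

lemma meas_sublevel_Ici (ν : Measure ℝ) (x : ℝ) (c : ℝ≥0∞) :
    ν ({t | ν (Ici t) < c} ∩ Ici x) ≤ c := by
  set S := {t | ν (Ici t) < c} ∩ Ici x with hSdef
  rcases S.eq_empty_or_nonempty with hS | hS
  · rw [hS]; simp
  · have hbdd : BddBelow S := ⟨x, fun t ht => ht.2⟩
    set u := sInf S with hu
    have hSu : ∀ t ∈ S, u ≤ t := fun t ht => csInf_le hbdd ht
    have hlow : ∀ t, u < t → ν (Ici t) < c := by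
      intro t ht
      obtain ⟨t', ht'S, htt'⟩ := exists_lt_of_csInf_lt hS ht
      exact lt_of_le_of_lt (measure_mono (Ici_subset_Ici.mpr htt'.le)) ht'S.1
    by_cases hmem : ν (Ici u) < c
    · exact le_trans (measure_mono (fun t ht => hSu t ht)) hmem.le
    · have hsub : S ⊆ Ioi u := by
        intro t ht
        rcases lt_or_eq_of_le (hSu t ht) with h | h
        · exact h
        · exact absurd (h ▸ ht.1) hmem
      refine le_trans (measure_mono hsub) ?_
      have hUnion : Ioi u = ⋃ n : ℕ, Ici (u + 1/(n+1)) := by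
        ext t; simp only [mem_Ioi, mem_iUnion, mem_Ici]
        constructor
        · intro h
          obtain ⟨n, hn⟩ := exists_nat_one_div_lt (sub_pos.mpr h)
          exact ⟨n, by linarith⟩
        · rintro ⟨n, hn⟩
          have hp : (0:ℝ) < 1/(n+1) := by positivity
          linarith
      have hmono : Monotone fun n : ℕ => Ici (u + 1/(n+1:ℝ)) := by
        intro m n hmn
        apply Ici_subset_Ici.mpr
        have h1 : (1:ℝ)/(n+1) ≤ 1/(m+1) := by
          apply one_div_le_one_div_of_le (by positivity)
          exact_mod_cast by linarith
        linarith
      rw [hUnion, (hmono.directed_le).measure_iUnion]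
      refine iSup_le fun n => (hlow _ ?_).le
      have hp : (0:ℝ) < 1/(n+1) := by positivity
      linarith

lemma min_integral {F : ℝ≥0∞} (htop : F ≠ ⊤) :
    ∫⁻ l in Ioi (0:ℝ), min ((ENNReal.ofReal l) ^ (-2:ℝ)) F ≤ 2 * F ^ (1/2:ℝ) := by
  by_cases hF0 : F = 0
  · subst hF0
    simp
  · have hhalf : F ^ (1/2:ℝ) ≠ 0 := by
      simp [ENNReal.rpow_eq_zero_iff, hF0]
    have hhalf_top : F ^ (1/2:ℝ) ≠ ⊤ := by
      simp [ENNReal.rpow_eq_top_iff, hF0, htop]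
    have hpow_ne_top : F ^ (-(1/2):ℝ) ≠ ⊤ := by
      rw [ENNReal.rpow_neg]; simpa using hhalf
    have hpow_ne_zero : F ^ (-(1/2):ℝ) ≠ 0 := by
      rw [ENNReal.rpow_neg]; simpa using hhalf_top
    set r0 : ℝ := (F ^ (-(1/2):ℝ)).toReal with hr0def
    have hr0pos : 0 < r0 := ENNReal.toReal_pos hpow_ne_zero hpow_ne_top
    have hofr0 : ENNReal.ofReal r0 = F ^ (-(1/2):ℝ) := ENNReal.ofReal_toReal hpow_ne_top
    rw [← Ioc_union_Ioi_eq_Ioi hr0pos.le,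
      lintegral_union measurableSet_Ioi Ioc_disjoint_Ioi_same]
    have part1 : ∫⁻ l in Ioc (0:ℝ) r0, min ((ENNReal.ofReal l) ^ (-2:ℝ)) F ≤ F ^ (1/2:ℝ) := by
      refine le_trans (lintegral_mono fun l => min_le_right _ _) ?_
      rw [setLIntegral_const, Real.volume_Ioc]
      rw [show r0 - 0 = r0 by ring, hofr0]
      rw [show F * F ^ (-(1/2):ℝ) = F ^ (1:ℝ) * F ^ (-(1/2):ℝ) by rw [ENNReal.rpow_one],
        ← ENNReal.rpow_add _ _ hF0 htop]
      norm_num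
    have part2 : ∫⁻ l in Ioi r0, min ((ENNReal.ofReal l) ^ (-2:ℝ)) F ≤ F ^ (1/2:ℝ) := by
      refine le_trans (lintegral_mono fun l => min_le_left _ _) ?_
      have hcong : ∫⁻ l in Ioi r0, (ENNReal.ofReal l) ^ (-2:ℝ)
          = ∫⁻ l in Ioi r0, ENNReal.ofReal (l ^ (-2:ℝ)) := by
        refine setLIntegral_congr_fun measurableSet_Ioi ?_
        intro l hl
        exact ENNReal.ofReal_rpow_of_pos (lt_trans hr0pos hl)
      rw [hcong]
      have hint : IntegrableOn (fun l : ℝ => l ^ (-2:ℝ)) (Ioi r0) :=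
        integrableOn_Ioi_rpow_of_lt (by norm_num) hr0pos
      have hnn : 0 ≤ᵐ[volume.restrict (Ioi r0)] fun l : ℝ => l ^ (-2:ℝ) := by
        filter_upwards [ae_restrict_mem measurableSet_Ioi] with l hl
        exact Real.rpow_nonneg (le_of_lt (lt_trans hr0pos hl)) _
      rw [← ofReal_integral_eq_lintegral_ofReal hint hnn]
      rw [integral_Ioi_rpow_of_lt (by norm_num) hr0pos]
      have : -r0 ^ ((-2:ℝ) + 1) / ((-2:ℝ) + 1) = r0⁻¹ := by
        norm_num
        rw [Real.rpow_neg_one]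
      rw [this, ENNReal.ofReal_inv_of_pos hr0pos, hofr0, ENNReal.rpow_neg, inv_inv]
    calc _ ≤ F ^ (1/2:ℝ) + F ^ (1/2:ℝ) := add_le_add part1 part2
      _ = 2 * F ^ (1/2:ℝ) := (two_mul _).symm

lemma key_Iic (ν : Measure ℝ) [SFinite ν] (x : ℝ) :
    ∫⁻ t in Iic x, (ν (Iic t)) ^ (-(1/2) : ℝ) ∂ν ≤ 2 * (ν (Iic x)) ^ (1/2 : ℝ) := by
  rcases eq_or_ne (ν (Iic x)) ⊤ with htop | htop
  · rw [htop]
    rw [ENNReal.top_rpow_of_pos (by norm_num)]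
    simp
  set F : ℝ → ℝ≥0∞ := fun t => ν (Iic t) with hFdef
  have hFmono : Monotone F := fun s t hst => measure_mono (Iic_subset_Iic.mpr hst)
  have hFmeas : Measurable F := hFmono.measurable
  set E : Set (ℝ × ℝ) := {p : ℝ × ℝ | ENNReal.ofReal p.2 < F p.1 ^ (-(1/2):ℝ)} with hEdef
  have hEmeas : MeasurableSet E := by
    apply measurableSet_lt
    · exact ENNReal.measurable_ofReal.comp measurable_snd
    · exact ((hFmeas.comp measurable_fst).pow_const _)
  have hrep : ∀ t, F t ^ (-(1/2):ℝ) = ∫⁻ l in Ioi (0:ℝ), E.indicator (fun _ => (1:ℝ≥0∞)) (t, l) := by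
    intro t
    have hAm : MeasurableSet {l : ℝ | ENNReal.ofReal l < F t ^ (-(1/2):ℝ)} :=
      ENNReal.measurable_ofReal measurableSet_Iio
    have : (fun l => E.indicator (fun _ => (1:ℝ≥0∞)) (t, l))
        = ({l : ℝ | ENNReal.ofReal l < F t ^ (-(1/2):ℝ)}).indicator (fun _ => (1:ℝ≥0∞)) := by
      ext l
      by_cases h : ENNReal.ofReal l < F t ^ (-(1/2):ℝ) <;>
        simp [E, indicator, h]
    rw [this, lintegral_indicator hAm, Measure.restrict_restrict hAm, setLIntegral_one,
      show {l : ℝ | ENNReal.ofReal l < F t ^ (-(1/2):ℝ)} ∩ Ioi 0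
        = {l : ℝ | 0 < l ∧ ENNReal.ofReal l < F t ^ (-(1/2):ℝ)} from by
        ext l; simp only [mem_inter_iff, mem_setOf_eq, mem_Ioi]; tauto,
      vol_lt]
  calc ∫⁻ t in Iic x, F t ^ (-(1/2):ℝ) ∂ν
      = ∫⁻ t in Iic x, (∫⁻ l in Ioi (0:ℝ), E.indicator (fun _ => (1:ℝ≥0∞)) (t, l)) ∂ν :=
        lintegral_congr hrep
    _ = ∫⁻ l in Ioi (0:ℝ), (∫⁻ t in Iic x, E.indicator (fun _ => (1:ℝ≥0∞)) (t, l) ∂ν) := by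
        exact lintegral_lintegral_swap (μ := ν.restrict (Iic x)) (ν := volume.restrict (Ioi 0))
          (f := fun t l => E.indicator (fun _ => (1:ℝ≥0∞)) (t, l))
          ((measurable_one.indicator hEmeas).aemeasurable)
    _ ≤ ∫⁻ l in Ioi (0:ℝ), min ((ENNReal.ofReal l) ^ (-2:ℝ)) (F x) := by
        refine setLIntegral_mono' measurableSet_Ioi fun l hl => ?_
        have hin : ∫⁻ t in Iic x, E.indicator (fun _ => (1:ℝ≥0∞)) (t, l) ∂ν
            = ν ({t | ENNReal.ofReal l < F t ^ (-(1/2):ℝ)} ∩ Iic x) := by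
          have hAm : MeasurableSet {t : ℝ | ENNReal.ofReal l < F t ^ (-(1/2):ℝ)} := by
            apply measurableSet_lt measurable_const ((hFmeas).pow_const _)
          have : (fun t => E.indicator (fun _ => (1:ℝ≥0∞)) (t, l))
              = ({t : ℝ | ENNReal.ofReal l < F t ^ (-(1/2):ℝ)}).indicator (fun _ => (1:ℝ≥0∞)) := by
            ext t
            by_cases h : ENNReal.ofReal l < F t ^ (-(1/2):ℝ) <;> simp [E, indicator, h]
          rw [this, lintegral_indicator hAm, Measure.restrict_restrict hAm, setLIntegral_one]
        rw [hin]
        have hset : {t | ENNReal.ofReal l < F t ^ (-(1/2):ℝ)}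
            = {t | F t < (ENNReal.ofReal l) ^ (-2:ℝ)} := by
          ext t; exact lt_rpow_neg_half_iff
        rw [hset]
        refine le_min ?_ ?_
        · exact meas_sublevel_Iic ν x _
        · exact measure_mono inter_subset_right
    _ ≤ 2 * (F x) ^ (1/2:ℝ) := min_integral htop

lemma key_Ici (ν : Measure ℝ) [SFinite ν] (x : ℝ) :
    ∫⁻ t in Ici x, (ν (Ici t)) ^ (-(1/2) : ℝ) ∂ν ≤ 2 * (ν (Ici x)) ^ (1/2 : ℝ) := by
  rcases eq_or_ne (ν (Ici x)) ⊤ with htop | htop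
  · rw [htop]
    rw [ENNReal.top_rpow_of_pos (by norm_num)]
    simp
  set F : ℝ → ℝ≥0∞ := fun t => ν (Ici t) with hFdef
  have hFanti : Antitone F := fun s t hst => measure_mono (Ici_subset_Ici.mpr hst)
  have hFmeas : Measurable F := hFanti.measurable
  set E : Set (ℝ × ℝ) := {p : ℝ × ℝ | ENNReal.ofReal p.2 < F p.1 ^ (-(1/2):ℝ)} with hEdef
  have hEmeas : MeasurableSet E := by
    apply measurableSet_lt
    · exact ENNReal.measurable_ofReal.comp measurable_snd
    · exact ((hFmeas.comp measurable_fst).pow_const _)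
  have hrep : ∀ t, F t ^ (-(1/2):ℝ) = ∫⁻ l in Ioi (0:ℝ), E.indicator (fun _ => (1:ℝ≥0∞)) (t, l) := by
    intro t
    have hAm : MeasurableSet {l : ℝ | ENNReal.ofReal l < F t ^ (-(1/2):ℝ)} :=
      ENNReal.measurable_ofReal measurableSet_Iio
    have h1 : (fun l => E.indicator (fun _ => (1:ℝ≥0∞)) (t, l))
        = ({l : ℝ | ENNReal.ofReal l < F t ^ (-(1/2):ℝ)}).indicator (fun _ => (1:ℝ≥0∞)) := by
      ext l
      by_cases h : ENNReal.ofReal l < F t ^ (-(1/2):ℝ) <;>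
        simp [E, indicator, h]
    rw [h1, lintegral_indicator hAm, Measure.restrict_restrict hAm, setLIntegral_one,
      show {l : ℝ | ENNReal.ofReal l < F t ^ (-(1/2):ℝ)} ∩ Ioi 0
        = {l : ℝ | 0 < l ∧ ENNReal.ofReal l < F t ^ (-(1/2):ℝ)} from by
        ext l; simp only [mem_inter_iff, mem_setOf_eq, mem_Ioi]; tauto,
      vol_lt]
  calc ∫⁻ t in Ici x, F t ^ (-(1/2):ℝ) ∂ν
      = ∫⁻ t in Ici x, (∫⁻ l in Ioi (0:ℝ), E.indicator (fun _ => (1:ℝ≥0∞)) (t, l)) ∂ν :=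
        lintegral_congr hrep
    _ = ∫⁻ l in Ioi (0:ℝ), (∫⁻ t in Ici x, E.indicator (fun _ => (1:ℝ≥0∞)) (t, l) ∂ν) := by
        exact lintegral_lintegral_swap (μ := ν.restrict (Ici x)) (ν := volume.restrict (Ioi 0))
          (f := fun t l => E.indicator (fun _ => (1:ℝ≥0∞)) (t, l))
          ((measurable_one.indicator hEmeas).aemeasurable)
    _ ≤ ∫⁻ l in Ioi (0:ℝ), min ((ENNReal.ofReal l) ^ (-2:ℝ)) (F x) := by
        refine setLIntegral_mono' measurableSet_Ioi fun l hl => ?_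
        have hin : ∫⁻ t in Ici x, E.indicator (fun _ => (1:ℝ≥0∞)) (t, l) ∂ν
            = ν ({t | ENNReal.ofReal l < F t ^ (-(1/2):ℝ)} ∩ Ici x) := by
          have hAm : MeasurableSet {t : ℝ | ENNReal.ofReal l < F t ^ (-(1/2):ℝ)} := by
            apply measurableSet_lt measurable_const ((hFmeas).pow_const _)
          have h2 : (fun t => E.indicator (fun _ => (1:ℝ≥0∞)) (t, l))
              = ({t : ℝ | ENNReal.ofReal l < F t ^ (-(1/2):ℝ)}).indicator (fun _ => (1:ℝ≥0∞)) := by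
            ext t
            by_cases h : ENNReal.ofReal l < F t ^ (-(1/2):ℝ) <;> simp [E, indicator, h]
          rw [h2, lintegral_indicator hAm, Measure.restrict_restrict hAm, setLIntegral_one]
        rw [hin]
        have hset : {t | ENNReal.ofReal l < F t ^ (-(1/2):ℝ)}
            = {t | F t < (ENNReal.ofReal l) ^ (-2:ℝ)} := by
          ext t; exact lt_rpow_neg_half_iff
        rw [hset]
        refine le_min ?_ ?_
        · exact meas_sublevel_Ici ν x _
        · exact measure_mono inter_subset_right
    _ ≤ 2 * (F x) ^ (1/2:ℝ) := min_integral htop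

lemma coreB (μ : Measure ℝ) [SFinite μ] {s : Set ℝ} (hs : MeasurableSet s)
    (φ ψ f : ℝ → ℂ) (hφ : Measurable φ) (hψ : Measurable ψ) (hf : Measurable f)
    (K : ℝ≥0∞) (hKtop : K ≠ ⊤)
    (hΦpos : ∀ x ∈ s, 0 < ∫⁻ t in s ∩ Iic x, (‖φ t‖₊ : ℝ≥0∞) ^ 2 ∂μ)
    (hΦfin : ∀ x ∈ s, ∫⁻ t in s ∩ Iic x, (‖φ t‖₊ : ℝ≥0∞) ^ 2 ∂μ ≠ ⊤)
    (hΨpos : ∀ x ∈ s, 0 < ∫⁻ t in s ∩ Ici x, (‖ψ t‖₊ : ℝ≥0∞) ^ 2 ∂μ)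
    (hΨfin : ∀ x ∈ s, ∫⁻ t in s ∩ Ici x, (‖ψ t‖₊ : ℝ≥0∞) ^ 2 ∂μ ≠ ⊤)
    (hK : ∀ x ∈ s, (∫⁻ t in s ∩ Iic x, (‖φ t‖₊ : ℝ≥0∞) ^ 2 ∂μ) ^ (1/2:ℝ) *
        (∫⁻ t in s ∩ Ici x, (‖ψ t‖₊ : ℝ≥0∞) ^ 2 ∂μ) ^ (1/2:ℝ) ≤ K) :
    ∫⁻ x in s, (‖ψ x‖₊ : ℝ≥0∞) ^ 2 * (‖∫ t in s ∩ Iic x, φ t * f t ∂μ‖₊ : ℝ≥0∞) ^ 2 ∂μ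
      ≤ 4 * K ^ 2 * ∫⁻ x in s, (‖f x‖₊ : ℝ≥0∞) ^ 2 ∂μ := by
  set Φ : ℝ → ℝ≥0∞ := fun x => ∫⁻ t in s ∩ Iic x, (‖φ t‖₊ : ℝ≥0∞) ^ 2 ∂μ with hΦdef
  set Ψ : ℝ → ℝ≥0∞ := fun x => ∫⁻ t in s ∩ Ici x, (‖ψ t‖₊ : ℝ≥0∞) ^ 2 ∂μ with hΨdef
  have hΦmono : Monotone Φ := fun u v huv =>
    lintegral_mono_set (inter_subset_inter_right _ (Iic_subset_Iic.mpr huv))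
  have hΨanti : Antitone Ψ := fun u v huv =>
    lintegral_mono_set (inter_subset_inter_right _ (Ici_subset_Ici.mpr huv))
  have hΦmeas : Measurable Φ := hΦmono.measurable
  have hΨmeas : Measurable Ψ := hΨanti.measurable
  have hdφ : Measurable fun t => (‖φ t‖₊ : ℝ≥0∞) ^ 2 := hφ.enorm.pow_const 2
  have hdψ : Measurable fun t => (‖ψ t‖₊ : ℝ≥0∞) ^ 2 := hψ.enorm.pow_const 2
  set νφ : Measure ℝ := (μ.restrict s).withDensity (fun t => (‖φ t‖₊ : ℝ≥0∞) ^ 2) with hνφdef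
  set νψ : Measure ℝ := (μ.restrict s).withDensity (fun t => (‖ψ t‖₊ : ℝ≥0∞) ^ 2) with hνψdef
  have hνφ : ∀ u, νφ (Iic u) = Φ u := by
    intro u
    rw [hνφdef, withDensity_apply _ measurableSet_Iic,
      Measure.restrict_restrict measurableSet_Iic, inter_comm]
  have hνψ : ∀ u, νψ (Ici u) = Ψ u := by
    intro u
    rw [hνψdef, withDensity_apply _ measurableSet_Ici,
      Measure.restrict_restrict measurableSet_Ici, inter_comm]
  -- the two weighted Hardy-type bounds
  have hΦ' : ∀ x, ∫⁻ t in s ∩ Iic x, (‖φ t‖₊ : ℝ≥0∞) ^ 2 * (Φ t) ^ (-(1/2):ℝ) ∂μ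
      ≤ 2 * (Φ x) ^ (1/2:ℝ) := by
    intro x
    have e1 : ∫⁻ t in Iic x, (Φ t) ^ (-(1/2):ℝ) ∂νφ
        = ∫⁻ t in Iic x, (‖φ t‖₊ : ℝ≥0∞) ^ 2 * (Φ t) ^ (-(1/2):ℝ) ∂(μ.restrict s) := by
      rw [hνφdef, restrict_withDensity measurableSet_Iic]
      exact lintegral_withDensity_eq_lintegral_mul _ hdφ (hΦmeas.pow_const _)
    have e2 : ∫⁻ t in Iic x, (‖φ t‖₊ : ℝ≥0∞) ^ 2 * (Φ t) ^ (-(1/2):ℝ) ∂(μ.restrict s)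
        = ∫⁻ t in s ∩ Iic x, (‖φ t‖₊ : ℝ≥0∞) ^ 2 * (Φ t) ^ (-(1/2):ℝ) ∂μ := by
      rw [Measure.restrict_restrict measurableSet_Iic, inter_comm]
    have e3 : ∫⁻ t in Iic x, (νφ (Iic t)) ^ (-(1/2):ℝ) ∂νφ
        = ∫⁻ t in Iic x, (Φ t) ^ (-(1/2):ℝ) ∂νφ :=
      lintegral_congr fun t => by rw [hνφ t]
    rw [← e2, ← e1, ← e3]
    calc ∫⁻ t in Iic x, (νφ (Iic t)) ^ (-(1/2):ℝ) ∂νφ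
        ≤ 2 * (νφ (Iic x)) ^ (1/2:ℝ) := key_Iic νφ x
      _ = 2 * (Φ x) ^ (1/2:ℝ) := by rw [hνφ x]
  have hΨ' : ∀ x, ∫⁻ t in s ∩ Ici x, (‖ψ t‖₊ : ℝ≥0∞) ^ 2 * (Ψ t) ^ (-(1/2):ℝ) ∂μ
      ≤ 2 * (Ψ x) ^ (1/2:ℝ) := by
    intro x
    have e1 : ∫⁻ t in Ici x, (Ψ t) ^ (-(1/2):ℝ) ∂νψ
        = ∫⁻ t in Ici x, (‖ψ t‖₊ : ℝ≥0∞) ^ 2 * (Ψ t) ^ (-(1/2):ℝ) ∂(μ.restrict s) := by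
      rw [hνψdef, restrict_withDensity measurableSet_Ici]
      exact lintegral_withDensity_eq_lintegral_mul _ hdψ (hΨmeas.pow_const _)
    have e2 : ∫⁻ t in Ici x, (‖ψ t‖₊ : ℝ≥0∞) ^ 2 * (Ψ t) ^ (-(1/2):ℝ) ∂(μ.restrict s)
        = ∫⁻ t in s ∩ Ici x, (‖ψ t‖₊ : ℝ≥0∞) ^ 2 * (Ψ t) ^ (-(1/2):ℝ) ∂μ := by
      rw [Measure.restrict_restrict measurableSet_Ici, inter_comm]
    have e3 : ∫⁻ t in Ici x, (νψ (Ici t)) ^ (-(1/2):ℝ) ∂νψ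
        = ∫⁻ t in Ici x, (Ψ t) ^ (-(1/2):ℝ) ∂νψ :=
      lintegral_congr fun t => by rw [hνψ t]
    rw [← e2, ← e1, ← e3]
    calc ∫⁻ t in Ici x, (νψ (Ici t)) ^ (-(1/2):ℝ) ∂νψ
        ≤ 2 * (νψ (Ici x)) ^ (1/2:ℝ) := key_Ici νψ x
      _ = 2 * (Ψ x) ^ (1/2:ℝ) := by rw [hνψ x]
  -- step 1 : pointwise Cauchy-Schwarz bound
  set g : ℝ → ℝ≥0∞ := fun t => (‖f t‖₊ : ℝ≥0∞) ^ 2 * (Φ t) ^ (1/2:ℝ) with hgdef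
  have hgmeas : Measurable g := (hf.enorm.pow_const 2).mul (hΦmeas.pow_const _)
  have step1 : ∀ x ∈ s, (‖∫ t in s ∩ Iic x, φ t * f t ∂μ‖₊ : ℝ≥0∞) ^ 2
      ≤ 2 * (Φ x) ^ (1/2:ℝ) * ∫⁻ t in s ∩ Iic x, g t ∂μ := by
    intro x hx
    have hE : MeasurableSet (s ∩ Iic x) := hs.inter measurableSet_Iic
    have hn : (‖∫ t in s ∩ Iic x, φ t * f t ∂μ‖₊ : ℝ≥0∞)
        ≤ ∫⁻ t in s ∩ Iic x, ‖φ t * f t‖₊ ∂μ := enorm_integral_le_lintegral_enorm _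
    have hsplit : ∫⁻ t in s ∩ Iic x, (‖φ t * f t‖₊ : ℝ≥0∞) ∂μ
        = ∫⁻ t in s ∩ Iic x,
            ((fun t => (‖φ t‖₊ : ℝ≥0∞) * (Φ t) ^ (-(1/4):ℝ)) *
              (fun t => (Φ t) ^ ((1/4):ℝ) * (‖f t‖₊ : ℝ≥0∞))) t ∂μ := by
      refine setLIntegral_congr_fun hE ?_
      intro t ht
      have h0 : Φ t ≠ 0 := (hΦpos t ht.1).ne'
      have ht' : Φ t ≠ ⊤ := hΦfin t ht.1
      have h1 : (Φ t) ^ (-(1/4):ℝ) * (Φ t) ^ ((1/4):ℝ) = 1 := by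
        rw [← ENNReal.rpow_add _ _ h0 ht']; norm_num
      simp only [Pi.mul_apply, nnnorm_mul, ENNReal.coe_mul]
      calc (‖φ t‖₊ : ℝ≥0∞) * (‖f t‖₊ : ℝ≥0∞)
          = (‖φ t‖₊ : ℝ≥0∞) * ((Φ t) ^ (-(1/4):ℝ) * (Φ t) ^ ((1/4):ℝ)) * (‖f t‖₊ : ℝ≥0∞) := by
            rw [h1, mul_one]
        _ = (‖φ t‖₊ : ℝ≥0∞) * (Φ t) ^ (-(1/4):ℝ) * ((Φ t) ^ ((1/4):ℝ) * (‖f t‖₊ : ℝ≥0∞)) := by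
            ring
    have hmeas1 : AEMeasurable (fun t => (‖φ t‖₊ : ℝ≥0∞) * (Φ t) ^ (-(1/4):ℝ))
        (μ.restrict (s ∩ Iic x)) := (hφ.enorm.mul (hΦmeas.pow_const _)).aemeasurable
    have hmeas2 : AEMeasurable (fun t => (Φ t) ^ ((1/4):ℝ) * (‖f t‖₊ : ℝ≥0∞))
        (μ.restrict (s ∩ Iic x)) := ((hΦmeas.pow_const _).mul hf.enorm).aemeasurable
    have hholder := ENNReal.lintegral_mul_le_Lp_mul_Lq (μ.restrict (s ∩ Iic x))
      (⟨by norm_num, by norm_num, by norm_num⟩ : Real.HolderConjugate 2 2) hmeas1 hmeas2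
    have hsq1 : ∫⁻ t in s ∩ Iic x, ((‖φ t‖₊ : ℝ≥0∞) * (Φ t) ^ (-(1/4):ℝ)) ^ (2:ℝ) ∂μ
        = ∫⁻ t in s ∩ Iic x, (‖φ t‖₊ : ℝ≥0∞) ^ 2 * (Φ t) ^ (-(1/2):ℝ) ∂μ := by
      refine setLIntegral_congr_fun hE ?_
      intro t ht; beta_reduce
      rw [ENNReal.mul_rpow_of_nonneg _ _ (by norm_num : (0:ℝ) ≤ 2), ← ENNReal.rpow_mul,
        ← sq_eq_rpow_two]
      norm_num
    have hsq2 : ∫⁻ t in s ∩ Iic x, ((Φ t) ^ ((1/4):ℝ) * (‖f t‖₊ : ℝ≥0∞)) ^ (2:ℝ) ∂μ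
        = ∫⁻ t in s ∩ Iic x, g t ∂μ := by
      refine setLIntegral_congr_fun hE ?_
      intro t ht; beta_reduce
      rw [ENNReal.mul_rpow_of_nonneg _ _ (by norm_num : (0:ℝ) ≤ 2), ← ENNReal.rpow_mul,
        ← sq_eq_rpow_two, hgdef]
      simp only
      rw [show (1/4:ℝ) * 2 = 1/2 by norm_num]
      ring
    rw [hsq1, hsq2] at hholder
    rw [hsplit] at hn
    calc (‖∫ t in s ∩ Iic x, φ t * f t ∂μ‖₊ : ℝ≥0∞) ^ 2
        ≤ ((∫⁻ t in s ∩ Iic x, (‖φ t‖₊ : ℝ≥0∞) ^ 2 * (Φ t) ^ (-(1/2):ℝ) ∂μ) ^ (1/2:ℝ) *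
            (∫⁻ t in s ∩ Iic x, g t ∂μ) ^ (1/2:ℝ)) ^ 2 := by
          rw [pow_two, pow_two]
          exact mul_le_mul' (hn.trans hholder) (hn.trans hholder)
      _ = (∫⁻ t in s ∩ Iic x, (‖φ t‖₊ : ℝ≥0∞) ^ 2 * (Φ t) ^ (-(1/2):ℝ) ∂μ) *
            (∫⁻ t in s ∩ Iic x, g t ∂μ) := by
          rw [mul_pow, rpow_half_sq, rpow_half_sq]
      _ ≤ 2 * (Φ x) ^ (1/2:ℝ) * ∫⁻ t in s ∩ Iic x, g t ∂μ :=
          mul_le_mul_left (hΦ' x) _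
  set h : ℝ → ℝ≥0∞ := fun x => (‖ψ x‖₊ : ℝ≥0∞) ^ 2 * (Φ x) ^ (1/2:ℝ) with hhdef
  have hhmeas : Measurable h := hdψ.mul (hΦmeas.pow_const _)
  set D : Set (ℝ × ℝ) := {p : ℝ × ℝ | p.2 ≤ p.1} with hDdef
  have hD : MeasurableSet D := measurableSet_le measurable_snd measurable_fst
  set k : ℝ → ℝ → ℝ≥0∞ := fun x t => D.indicator (fun p => h p.1 * g p.2) (x, t) with hkdef
  calc ∫⁻ x in s, (‖ψ x‖₊ : ℝ≥0∞) ^ 2 * (‖∫ t in s ∩ Iic x, φ t * f t ∂μ‖₊ : ℝ≥0∞) ^ 2 ∂μ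
      ≤ ∫⁻ x in s, (‖ψ x‖₊ : ℝ≥0∞) ^ 2 *
          (2 * (Φ x) ^ (1/2:ℝ) * ∫⁻ t in s ∩ Iic x, g t ∂μ) ∂μ :=
        setLIntegral_mono' hs fun x hx => mul_le_mul_right (step1 x hx) _
    _ = ∫⁻ x in s, 2 * (∫⁻ t, k x t ∂(μ.restrict s)) ∂μ := by
        refine setLIntegral_congr_fun hs ?_
        intro x hx
        have hfinh : h x ≠ ⊤ := by
          simp only [hhdef]
          exact ENNReal.mul_ne_top (by simp)
            (ENNReal.rpow_ne_top_of_nonneg (by norm_num) (hΦfin x hx))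
        have e1 : (fun t => k x t) = (Iic x).indicator (fun t => h x * g t) := by
          ext t; by_cases hx' : t ≤ x <;> simp [hkdef, hDdef, indicator, hx']
        have e2 : ∫⁻ t, k x t ∂(μ.restrict s) = h x * ∫⁻ t in s ∩ Iic x, g t ∂μ := by
          rw [e1, lintegral_indicator measurableSet_Iic,
            Measure.restrict_restrict measurableSet_Iic, inter_comm,
            lintegral_const_mul' _ _ hfinh]
        beta_reduce; rw [e2, hhdef]
        simp only
        ring
    _ = 2 * ∫⁻ x, (∫⁻ t, k x t ∂(μ.restrict s)) ∂(μ.restrict s) :=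
        lintegral_const_mul' 2 _ (by norm_num)
    _ = 2 * ∫⁻ t, (∫⁻ x, k x t ∂(μ.restrict s)) ∂(μ.restrict s) := by
        congr 1
        exact lintegral_lintegral_swap (f := k)
          ((((hhmeas.comp measurable_fst).mul (hgmeas.comp measurable_snd)).indicator hD).aemeasurable)
    _ ≤ 2 * ∫⁻ t in s, (2 * K ^ 2 * (Φ t) ^ (-(1/2):ℝ)) * g t ∂μ := by
        refine mul_le_mul_right ?_ 2
        refine setLIntegral_mono' hs fun t ht => ?_
        have hgt : g t ≠ ⊤ := by
          simp only [hgdef]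
          exact ENNReal.mul_ne_top (by simp)
            (ENNReal.rpow_ne_top_of_nonneg (by norm_num) (hΦfin t ht))
        have e1 : (fun x => k x t) = (Ici t).indicator (fun x => h x * g t) := by
          ext x; by_cases hx' : t ≤ x <;> simp [hkdef, hDdef, indicator, hx', mem_Ici]
        have e2 : ∫⁻ x, k x t ∂(μ.restrict s) = (∫⁻ x in s ∩ Ici t, h x ∂μ) * g t := by
          rw [e1, lintegral_indicator measurableSet_Ici,
            Measure.restrict_restrict measurableSet_Ici, inter_comm,
            lintegral_mul_const' _ _ hgt]
        rw [e2]
        refine mul_le_mul_left ?_ (g t)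
        calc ∫⁻ x in s ∩ Ici t, h x ∂μ
            ≤ ∫⁻ x in s ∩ Ici t, K * ((‖ψ x‖₊ : ℝ≥0∞) ^ 2 * (Ψ x) ^ (-(1/2):ℝ)) ∂μ := by
              refine setLIntegral_mono' (hs.inter measurableSet_Ici) fun x hx' => ?_
              have hx := hx'.1
              have h0 : Ψ x ≠ 0 := (hΨpos x hx).ne'
              have ht' : Ψ x ≠ ⊤ := hΨfin x hx
              have h1 : (Ψ x) ^ ((1/2):ℝ) * (Ψ x) ^ (-(1/2):ℝ) = 1 := by
                rw [← ENNReal.rpow_add _ _ h0 ht']; norm_num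
              have hle : (Φ x) ^ (1/2:ℝ) ≤ K * (Ψ x) ^ (-(1/2):ℝ) := by
                calc (Φ x) ^ (1/2:ℝ)
                    = (Φ x) ^ (1/2:ℝ) * ((Ψ x) ^ ((1/2):ℝ) * (Ψ x) ^ (-(1/2):ℝ)) := by
                      rw [h1, mul_one]
                  _ = ((Φ x) ^ (1/2:ℝ) * (Ψ x) ^ ((1/2):ℝ)) * (Ψ x) ^ (-(1/2):ℝ) := by ring
                  _ ≤ K * (Ψ x) ^ (-(1/2):ℝ) := mul_le_mul_left (hK x hx) _
              calc h x = (‖ψ x‖₊ : ℝ≥0∞) ^ 2 * (Φ x) ^ (1/2:ℝ) := by rw [hhdef]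
                _ ≤ (‖ψ x‖₊ : ℝ≥0∞) ^ 2 * (K * (Ψ x) ^ (-(1/2):ℝ)) := mul_le_mul_right hle _
                _ = K * ((‖ψ x‖₊ : ℝ≥0∞) ^ 2 * (Ψ x) ^ (-(1/2):ℝ)) := by ring
          _ = K * ∫⁻ x in s ∩ Ici t, (‖ψ x‖₊ : ℝ≥0∞) ^ 2 * (Ψ x) ^ (-(1/2):ℝ) ∂μ :=
              lintegral_const_mul' _ _ hKtop
          _ ≤ K * (2 * (Ψ t) ^ (1/2:ℝ)) := mul_le_mul_right (hΨ' t) _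
          _ ≤ K * (2 * (K * (Φ t) ^ (-(1/2):ℝ))) := by
              refine mul_le_mul_right (mul_le_mul_right ?_ 2) K
              have h0 : Φ t ≠ 0 := (hΦpos t ht).ne'
              have ht' : Φ t ≠ ⊤ := hΦfin t ht
              have h1 : (Φ t) ^ (-(1/2):ℝ) * (Φ t) ^ ((1/2):ℝ) = 1 := by
                rw [← ENNReal.rpow_add _ _ h0 ht']; norm_num
              calc (Ψ t) ^ (1/2:ℝ)
                  = ((Φ t) ^ (-(1/2):ℝ) * (Φ t) ^ ((1/2):ℝ)) * (Ψ t) ^ (1/2:ℝ) := by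
                    rw [h1, one_mul]
                _ = (Φ t) ^ (-(1/2):ℝ) * ((Φ t) ^ ((1/2):ℝ) * (Ψ t) ^ (1/2:ℝ)) := by ring
                _ ≤ (Φ t) ^ (-(1/2):ℝ) * K := mul_le_mul_right (hK t ht) _
                _ = K * (Φ t) ^ (-(1/2):ℝ) := mul_comm _ _
          _ = 2 * K ^ 2 * (Φ t) ^ (-(1/2):ℝ) := by ring
    _ = 2 * ∫⁻ t in s, 2 * K ^ 2 * (‖f t‖₊ : ℝ≥0∞) ^ 2 ∂μ := by
        congr 1
        refine setLIntegral_congr_fun hs ?_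
        intro t ht
        have h0 : Φ t ≠ 0 := (hΦpos t ht).ne'
        have ht' : Φ t ≠ ⊤ := hΦfin t ht
        have h1 : (Φ t) ^ (-(1/2):ℝ) * (Φ t) ^ ((1/2):ℝ) = 1 := by
          rw [← ENNReal.rpow_add _ _ h0 ht']; norm_num
        rw [hgdef]
        simp only
        calc 2 * K ^ 2 * (Φ t) ^ (-(1/2):ℝ) * ((‖f t‖₊ : ℝ≥0∞) ^ 2 * (Φ t) ^ (1/2:ℝ))
            = 2 * K ^ 2 * (‖f t‖₊ : ℝ≥0∞) ^ 2 * ((Φ t) ^ (-(1/2):ℝ) * (Φ t) ^ ((1/2):ℝ)) := by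
              ring
          _ = 2 * K ^ 2 * (‖f t‖₊ : ℝ≥0∞) ^ 2 := by rw [h1, mul_one]
    _ = 4 * K ^ 2 * ∫⁻ x in s, (‖f x‖₊ : ℝ≥0∞) ^ 2 ∂μ := by
        rw [lintegral_const_mul' (2 * K ^ 2) _
          (ENNReal.mul_ne_top (by norm_num) (ENNReal.pow_ne_top hKtop))]
        ring

lemma coreA (μ : Measure ℝ) [SFinite μ] {s : Set ℝ} (hs : MeasurableSet s)
    (φ ψ f : ℝ → ℂ) (hφ : Measurable φ) (hψ : Measurable ψ) (hf : Measurable f)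
    (K : ℝ≥0∞) (hKtop : K ≠ ⊤)
    (hΦpos : ∀ x ∈ s, 0 < ∫⁻ t in s ∩ Iic x, (‖φ t‖₊ : ℝ≥0∞) ^ 2 ∂μ)
    (hΦfin : ∀ x ∈ s, ∫⁻ t in s ∩ Iic x, (‖φ t‖₊ : ℝ≥0∞) ^ 2 ∂μ ≠ ⊤)
    (hΨpos : ∀ x ∈ s, 0 < ∫⁻ t in s ∩ Ici x, (‖ψ t‖₊ : ℝ≥0∞) ^ 2 ∂μ)
    (hΨfin : ∀ x ∈ s, ∫⁻ t in s ∩ Ici x, (‖ψ t‖₊ : ℝ≥0∞) ^ 2 ∂μ ≠ ⊤)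
    (hK : ∀ x ∈ s, (∫⁻ t in s ∩ Iic x, (‖φ t‖₊ : ℝ≥0∞) ^ 2 ∂μ) ^ (1/2:ℝ) *
        (∫⁻ t in s ∩ Ici x, (‖ψ t‖₊ : ℝ≥0∞) ^ 2 ∂μ) ^ (1/2:ℝ) ≤ K) :
    ∫⁻ x in s, (‖φ x‖₊ : ℝ≥0∞) ^ 2 * (‖∫ t in s ∩ Ici x, ψ t * f t ∂μ‖₊ : ℝ≥0∞) ^ 2 ∂μ
      ≤ 4 * K ^ 2 * ∫⁻ x in s, (‖f x‖₊ : ℝ≥0∞) ^ 2 ∂μ := by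
  set Φ : ℝ → ℝ≥0∞ := fun x => ∫⁻ t in s ∩ Iic x, (‖φ t‖₊ : ℝ≥0∞) ^ 2 ∂μ with hΦdef
  set Ψ : ℝ → ℝ≥0∞ := fun x => ∫⁻ t in s ∩ Ici x, (‖ψ t‖₊ : ℝ≥0∞) ^ 2 ∂μ with hΨdef
  have hΦmono : Monotone Φ := fun u v huv =>
    lintegral_mono_set (inter_subset_inter_right _ (Iic_subset_Iic.mpr huv))
  have hΨanti : Antitone Ψ := fun u v huv =>
    lintegral_mono_set (inter_subset_inter_right _ (Ici_subset_Ici.mpr huv))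
  have hΦmeas : Measurable Φ := hΦmono.measurable
  have hΨmeas : Measurable Ψ := hΨanti.measurable
  have hdφ : Measurable fun t => (‖φ t‖₊ : ℝ≥0∞) ^ 2 := hφ.enorm.pow_const 2
  have hdψ : Measurable fun t => (‖ψ t‖₊ : ℝ≥0∞) ^ 2 := hψ.enorm.pow_const 2
  set νφ : Measure ℝ := (μ.restrict s).withDensity (fun t => (‖φ t‖₊ : ℝ≥0∞) ^ 2) with hνφdef
  set νψ : Measure ℝ := (μ.restrict s).withDensity (fun t => (‖ψ t‖₊ : ℝ≥0∞) ^ 2) with hνψdef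
  have hνφ : ∀ u, νφ (Iic u) = Φ u := by
    intro u
    rw [hνφdef, withDensity_apply _ measurableSet_Iic,
      Measure.restrict_restrict measurableSet_Iic, inter_comm]
  have hνψ : ∀ u, νψ (Ici u) = Ψ u := by
    intro u
    rw [hνψdef, withDensity_apply _ measurableSet_Ici,
      Measure.restrict_restrict measurableSet_Ici, inter_comm]
  have hΦ' : ∀ x, ∫⁻ t in s ∩ Iic x, (‖φ t‖₊ : ℝ≥0∞) ^ 2 * (Φ t) ^ (-(1/2):ℝ) ∂μ
      ≤ 2 * (Φ x) ^ (1/2:ℝ) := by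
    intro x
    have e1 : ∫⁻ t in Iic x, (Φ t) ^ (-(1/2):ℝ) ∂νφ
        = ∫⁻ t in Iic x, (‖φ t‖₊ : ℝ≥0∞) ^ 2 * (Φ t) ^ (-(1/2):ℝ) ∂(μ.restrict s) := by
      rw [hνφdef, restrict_withDensity measurableSet_Iic]
      exact lintegral_withDensity_eq_lintegral_mul _ hdφ (hΦmeas.pow_const _)
    have e2 : ∫⁻ t in Iic x, (‖φ t‖₊ : ℝ≥0∞) ^ 2 * (Φ t) ^ (-(1/2):ℝ) ∂(μ.restrict s)
        = ∫⁻ t in s ∩ Iic x, (‖φ t‖₊ : ℝ≥0∞) ^ 2 * (Φ t) ^ (-(1/2):ℝ) ∂μ := by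
      rw [Measure.restrict_restrict measurableSet_Iic, inter_comm]
    have e3 : ∫⁻ t in Iic x, (νφ (Iic t)) ^ (-(1/2):ℝ) ∂νφ
        = ∫⁻ t in Iic x, (Φ t) ^ (-(1/2):ℝ) ∂νφ :=
      lintegral_congr fun t => by rw [hνφ t]
    rw [← e2, ← e1, ← e3]
    calc ∫⁻ t in Iic x, (νφ (Iic t)) ^ (-(1/2):ℝ) ∂νφ
        ≤ 2 * (νφ (Iic x)) ^ (1/2:ℝ) := key_Iic νφ x
      _ = 2 * (Φ x) ^ (1/2:ℝ) := by rw [hνφ x]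
  have hΨ' : ∀ x, ∫⁻ t in s ∩ Ici x, (‖ψ t‖₊ : ℝ≥0∞) ^ 2 * (Ψ t) ^ (-(1/2):ℝ) ∂μ
      ≤ 2 * (Ψ x) ^ (1/2:ℝ) := by
    intro x
    have e1 : ∫⁻ t in Ici x, (Ψ t) ^ (-(1/2):ℝ) ∂νψ
        = ∫⁻ t in Ici x, (‖ψ t‖₊ : ℝ≥0∞) ^ 2 * (Ψ t) ^ (-(1/2):ℝ) ∂(μ.restrict s) := by
      rw [hνψdef, restrict_withDensity measurableSet_Ici]
      exact lintegral_withDensity_eq_lintegral_mul _ hdψ (hΨmeas.pow_const _)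
    have e2 : ∫⁻ t in Ici x, (‖ψ t‖₊ : ℝ≥0∞) ^ 2 * (Ψ t) ^ (-(1/2):ℝ) ∂(μ.restrict s)
        = ∫⁻ t in s ∩ Ici x, (‖ψ t‖₊ : ℝ≥0∞) ^ 2 * (Ψ t) ^ (-(1/2):ℝ) ∂μ := by
      rw [Measure.restrict_restrict measurableSet_Ici, inter_comm]
    have e3 : ∫⁻ t in Ici x, (νψ (Ici t)) ^ (-(1/2):ℝ) ∂νψ
        = ∫⁻ t in Ici x, (Ψ t) ^ (-(1/2):ℝ) ∂νψ :=
      lintegral_congr fun t => by rw [hνψ t]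
    rw [← e2, ← e1, ← e3]
    calc ∫⁻ t in Ici x, (νψ (Ici t)) ^ (-(1/2):ℝ) ∂νψ
        ≤ 2 * (νψ (Ici x)) ^ (1/2:ℝ) := key_Ici νψ x
      _ = 2 * (Ψ x) ^ (1/2:ℝ) := by rw [hνψ x]
  set g : ℝ → ℝ≥0∞ := fun t => (‖f t‖₊ : ℝ≥0∞) ^ 2 * (Ψ t) ^ (1/2:ℝ) with hgdef
  have hgmeas : Measurable g := (hf.enorm.pow_const 2).mul (hΨmeas.pow_const _)
  have step1 : ∀ x ∈ s, (‖∫ t in s ∩ Ici x, ψ t * f t ∂μ‖₊ : ℝ≥0∞) ^ 2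
      ≤ 2 * (Ψ x) ^ (1/2:ℝ) * ∫⁻ t in s ∩ Ici x, g t ∂μ := by
    intro x hx
    have hE : MeasurableSet (s ∩ Ici x) := hs.inter measurableSet_Ici
    have hn : (‖∫ t in s ∩ Ici x, ψ t * f t ∂μ‖₊ : ℝ≥0∞)
        ≤ ∫⁻ t in s ∩ Ici x, ‖ψ t * f t‖₊ ∂μ := enorm_integral_le_lintegral_enorm _
    have hsplit : ∫⁻ t in s ∩ Ici x, (‖ψ t * f t‖₊ : ℝ≥0∞) ∂μ
        = ∫⁻ t in s ∩ Ici x,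
            ((fun t => (‖ψ t‖₊ : ℝ≥0∞) * (Ψ t) ^ (-(1/4):ℝ)) *
              (fun t => (Ψ t) ^ ((1/4):ℝ) * (‖f t‖₊ : ℝ≥0∞))) t ∂μ := by
      refine setLIntegral_congr_fun hE ?_
      intro t ht
      have h0 : Ψ t ≠ 0 := (hΨpos t ht.1).ne'
      have ht' : Ψ t ≠ ⊤ := hΨfin t ht.1
      have h1 : (Ψ t) ^ (-(1/4):ℝ) * (Ψ t) ^ ((1/4):ℝ) = 1 := by
        rw [← ENNReal.rpow_add _ _ h0 ht']; norm_num
      simp only [Pi.mul_apply, nnnorm_mul, ENNReal.coe_mul]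
      calc (‖ψ t‖₊ : ℝ≥0∞) * (‖f t‖₊ : ℝ≥0∞)
          = (‖ψ t‖₊ : ℝ≥0∞) * ((Ψ t) ^ (-(1/4):ℝ) * (Ψ t) ^ ((1/4):ℝ)) * (‖f t‖₊ : ℝ≥0∞) := by
            rw [h1, mul_one]
        _ = (‖ψ t‖₊ : ℝ≥0∞) * (Ψ t) ^ (-(1/4):ℝ) * ((Ψ t) ^ ((1/4):ℝ) * (‖f t‖₊ : ℝ≥0∞)) := by
            ring
    have hmeas1 : AEMeasurable (fun t => (‖ψ t‖₊ : ℝ≥0∞) * (Ψ t) ^ (-(1/4):ℝ))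
        (μ.restrict (s ∩ Ici x)) := (hψ.enorm.mul (hΨmeas.pow_const _)).aemeasurable
    have hmeas2 : AEMeasurable (fun t => (Ψ t) ^ ((1/4):ℝ) * (‖f t‖₊ : ℝ≥0∞))
        (μ.restrict (s ∩ Ici x)) := ((hΨmeas.pow_const _).mul hf.enorm).aemeasurable
    have hholder := ENNReal.lintegral_mul_le_Lp_mul_Lq (μ.restrict (s ∩ Ici x))
      (⟨by norm_num, by norm_num, by norm_num⟩ : Real.HolderConjugate 2 2) hmeas1 hmeas2
    have hsq1 : ∫⁻ t in s ∩ Ici x, ((‖ψ t‖₊ : ℝ≥0∞) * (Ψ t) ^ (-(1/4):ℝ)) ^ (2:ℝ) ∂μ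
        = ∫⁻ t in s ∩ Ici x, (‖ψ t‖₊ : ℝ≥0∞) ^ 2 * (Ψ t) ^ (-(1/2):ℝ) ∂μ := by
      refine setLIntegral_congr_fun hE ?_
      intro t ht; beta_reduce
      rw [ENNReal.mul_rpow_of_nonneg _ _ (by norm_num : (0:ℝ) ≤ 2), ← ENNReal.rpow_mul,
        ← sq_eq_rpow_two]
      norm_num
    have hsq2 : ∫⁻ t in s ∩ Ici x, ((Ψ t) ^ ((1/4):ℝ) * (‖f t‖₊ : ℝ≥0∞)) ^ (2:ℝ) ∂μ
        = ∫⁻ t in s ∩ Ici x, g t ∂μ := by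
      refine setLIntegral_congr_fun hE ?_
      intro t ht; beta_reduce
      rw [ENNReal.mul_rpow_of_nonneg _ _ (by norm_num : (0:ℝ) ≤ 2), ← ENNReal.rpow_mul,
        ← sq_eq_rpow_two, hgdef]
      simp only
      rw [show (1/4:ℝ) * 2 = 1/2 by norm_num]
      ring
    rw [hsq1, hsq2] at hholder
    rw [hsplit] at hn
    calc (‖∫ t in s ∩ Ici x, ψ t * f t ∂μ‖₊ : ℝ≥0∞) ^ 2
        ≤ ((∫⁻ t in s ∩ Ici x, (‖ψ t‖₊ : ℝ≥0∞) ^ 2 * (Ψ t) ^ (-(1/2):ℝ) ∂μ) ^ (1/2:ℝ) *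
            (∫⁻ t in s ∩ Ici x, g t ∂μ) ^ (1/2:ℝ)) ^ 2 := by
          rw [pow_two, pow_two]
          exact mul_le_mul' (hn.trans hholder) (hn.trans hholder)
      _ = (∫⁻ t in s ∩ Ici x, (‖ψ t‖₊ : ℝ≥0∞) ^ 2 * (Ψ t) ^ (-(1/2):ℝ) ∂μ) *
            (∫⁻ t in s ∩ Ici x, g t ∂μ) := by
          rw [mul_pow, rpow_half_sq, rpow_half_sq]
      _ ≤ 2 * (Ψ x) ^ (1/2:ℝ) * ∫⁻ t in s ∩ Ici x, g t ∂μ :=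
          mul_le_mul_left (hΨ' x) _
  set h : ℝ → ℝ≥0∞ := fun x => (‖φ x‖₊ : ℝ≥0∞) ^ 2 * (Ψ x) ^ (1/2:ℝ) with hhdef
  have hhmeas : Measurable h := hdφ.mul (hΨmeas.pow_const _)
  set D : Set (ℝ × ℝ) := {p : ℝ × ℝ | p.1 ≤ p.2} with hDdef
  have hD : MeasurableSet D := measurableSet_le measurable_fst measurable_snd
  set k : ℝ → ℝ → ℝ≥0∞ := fun x t => D.indicator (fun p => h p.1 * g p.2) (x, t) with hkdef
  calc ∫⁻ x in s, (‖φ x‖₊ : ℝ≥0∞) ^ 2 * (‖∫ t in s ∩ Ici x, ψ t * f t ∂μ‖₊ : ℝ≥0∞) ^ 2 ∂μ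
      ≤ ∫⁻ x in s, (‖φ x‖₊ : ℝ≥0∞) ^ 2 *
          (2 * (Ψ x) ^ (1/2:ℝ) * ∫⁻ t in s ∩ Ici x, g t ∂μ) ∂μ :=
        setLIntegral_mono' hs fun x hx => mul_le_mul_right (step1 x hx) _
    _ = ∫⁻ x in s, 2 * (∫⁻ t, k x t ∂(μ.restrict s)) ∂μ := by
        refine setLIntegral_congr_fun hs ?_
        intro x hx
        have hfinh : h x ≠ ⊤ := by
          simp only [hhdef]
          exact ENNReal.mul_ne_top (by simp)
            (ENNReal.rpow_ne_top_of_nonneg (by norm_num) (hΨfin x hx))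
        have e1 : (fun t => k x t) = (Ici x).indicator (fun t => h x * g t) := by
          ext t; by_cases hx' : x ≤ t <;> simp [hkdef, hDdef, indicator, hx', mem_Ici]
        have e2 : ∫⁻ t, k x t ∂(μ.restrict s) = h x * ∫⁻ t in s ∩ Ici x, g t ∂μ := by
          rw [e1, lintegral_indicator measurableSet_Ici,
            Measure.restrict_restrict measurableSet_Ici, inter_comm,
            lintegral_const_mul' _ _ hfinh]
        beta_reduce; rw [e2, hhdef]
        simp only
        ring
    _ = 2 * ∫⁻ x, (∫⁻ t, k x t ∂(μ.restrict s)) ∂(μ.restrict s) :=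
        lintegral_const_mul' 2 _ (by norm_num)
    _ = 2 * ∫⁻ t, (∫⁻ x, k x t ∂(μ.restrict s)) ∂(μ.restrict s) := by
        congr 1
        exact lintegral_lintegral_swap (f := k)
          ((((hhmeas.comp measurable_fst).mul (hgmeas.comp measurable_snd)).indicator hD).aemeasurable)
    _ ≤ 2 * ∫⁻ t in s, (2 * K ^ 2 * (Ψ t) ^ (-(1/2):ℝ)) * g t ∂μ := by
        refine mul_le_mul_right ?_ 2
        refine setLIntegral_mono' hs fun t ht => ?_
        have hgt : g t ≠ ⊤ := by
          simp only [hgdef]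
          exact ENNReal.mul_ne_top (by simp)
            (ENNReal.rpow_ne_top_of_nonneg (by norm_num) (hΨfin t ht))
        have e1 : (fun x => k x t) = (Iic t).indicator (fun x => h x * g t) := by
          ext x; by_cases hx' : x ≤ t <;> simp [hkdef, hDdef, indicator, hx']
        have e2 : ∫⁻ x, k x t ∂(μ.restrict s) = (∫⁻ x in s ∩ Iic t, h x ∂μ) * g t := by
          rw [e1, lintegral_indicator measurableSet_Iic,
            Measure.restrict_restrict measurableSet_Iic, inter_comm,
            lintegral_mul_const' _ _ hgt]
        rw [e2]
        refine mul_le_mul_left ?_ (g t)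
        calc ∫⁻ x in s ∩ Iic t, h x ∂μ
            ≤ ∫⁻ x in s ∩ Iic t, K * ((‖φ x‖₊ : ℝ≥0∞) ^ 2 * (Φ x) ^ (-(1/2):ℝ)) ∂μ := by
              refine setLIntegral_mono' (hs.inter measurableSet_Iic) fun x hx' => ?_
              have hx := hx'.1
              have h0 : Φ x ≠ 0 := (hΦpos x hx).ne'
              have ht' : Φ x ≠ ⊤ := hΦfin x hx
              have h1 : (Φ x) ^ ((1/2):ℝ) * (Φ x) ^ (-(1/2):ℝ) = 1 := by
                rw [← ENNReal.rpow_add _ _ h0 ht']; norm_num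
              have hle : (Ψ x) ^ (1/2:ℝ) ≤ K * (Φ x) ^ (-(1/2):ℝ) := by
                calc (Ψ x) ^ (1/2:ℝ)
                    = (Ψ x) ^ (1/2:ℝ) * ((Φ x) ^ ((1/2):ℝ) * (Φ x) ^ (-(1/2):ℝ)) := by
                      rw [h1, mul_one]
                  _ = ((Φ x) ^ (1/2:ℝ) * (Ψ x) ^ ((1/2):ℝ)) * (Φ x) ^ (-(1/2):ℝ) := by ring
                  _ ≤ K * (Φ x) ^ (-(1/2):ℝ) := mul_le_mul_left (hK x hx) _
              calc h x = (‖φ x‖₊ : ℝ≥0∞) ^ 2 * (Ψ x) ^ (1/2:ℝ) := by rw [hhdef]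
                _ ≤ (‖φ x‖₊ : ℝ≥0∞) ^ 2 * (K * (Φ x) ^ (-(1/2):ℝ)) := mul_le_mul_right hle _
                _ = K * ((‖φ x‖₊ : ℝ≥0∞) ^ 2 * (Φ x) ^ (-(1/2):ℝ)) := by ring
          _ = K * ∫⁻ x in s ∩ Iic t, (‖φ x‖₊ : ℝ≥0∞) ^ 2 * (Φ x) ^ (-(1/2):ℝ) ∂μ :=
              lintegral_const_mul' _ _ hKtop
          _ ≤ K * (2 * (Φ t) ^ (1/2:ℝ)) := mul_le_mul_right (hΦ' t) _
          _ ≤ K * (2 * (K * (Ψ t) ^ (-(1/2):ℝ))) := by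
              refine mul_le_mul_right (mul_le_mul_right ?_ 2) K
              have h0 : Ψ t ≠ 0 := (hΨpos t ht).ne'
              have ht' : Ψ t ≠ ⊤ := hΨfin t ht
              have h1 : (Ψ t) ^ (-(1/2):ℝ) * (Ψ t) ^ ((1/2):ℝ) = 1 := by
                rw [← ENNReal.rpow_add _ _ h0 ht']; norm_num
              calc (Φ t) ^ (1/2:ℝ)
                  = ((Ψ t) ^ (-(1/2):ℝ) * (Ψ t) ^ ((1/2):ℝ)) * (Φ t) ^ (1/2:ℝ) := by
                    rw [h1, one_mul]
                _ = (Ψ t) ^ (-(1/2):ℝ) * ((Φ t) ^ ((1/2):ℝ) * (Ψ t) ^ (1/2:ℝ)) := by ring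
                _ ≤ (Ψ t) ^ (-(1/2):ℝ) * K := mul_le_mul_right (hK t ht) _
                _ = K * (Ψ t) ^ (-(1/2):ℝ) := mul_comm _ _
          _ = 2 * K ^ 2 * (Ψ t) ^ (-(1/2):ℝ) := by ring
    _ = 2 * ∫⁻ t in s, 2 * K ^ 2 * (‖f t‖₊ : ℝ≥0∞) ^ 2 ∂μ := by
        congr 1
        refine setLIntegral_congr_fun hs ?_
        intro t ht
        have h0 : Ψ t ≠ 0 := (hΨpos t ht).ne'
        have ht' : Ψ t ≠ ⊤ := hΨfin t ht
        have h1 : (Ψ t) ^ (-(1/2):ℝ) * (Ψ t) ^ ((1/2):ℝ) = 1 := by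
          rw [← ENNReal.rpow_add _ _ h0 ht']; norm_num
        rw [hgdef]
        simp only
        calc 2 * K ^ 2 * (Ψ t) ^ (-(1/2):ℝ) * ((‖f t‖₊ : ℝ≥0∞) ^ 2 * (Ψ t) ^ (1/2:ℝ))
            = 2 * K ^ 2 * (‖f t‖₊ : ℝ≥0∞) ^ 2 * ((Ψ t) ^ (-(1/2):ℝ) * (Ψ t) ^ ((1/2):ℝ)) := by
              ring
          _ = 2 * K ^ 2 * (‖f t‖₊ : ℝ≥0∞) ^ 2 := by rw [h1, mul_one]
    _ = 4 * K ^ 2 * ∫⁻ x in s, (‖f x‖₊ : ℝ≥0∞) ^ 2 ∂μ := by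
        rw [lintegral_const_mul' (2 * K ^ 2) _
          (ENNReal.mul_ne_top (by norm_num) (ENNReal.pow_ne_top hKtop))]
        ring


lemma eLpNorm_two_eq (κ : Measure ℝ) (g : ℝ → ℂ) :
    eLpNorm g 2 κ = (∫⁻ x, ((‖g x‖₊ : ℝ≥0∞)) ^ 2 ∂κ) ^ (1/2:ℝ) := by
  rw [eLpNorm_eq_lintegral_rpow_enorm_toReal (by norm_num) (by norm_num)]
  rw [show (2:ℝ≥0∞).toReal = (2:ℝ) by norm_num]
  congr 1
  exact lintegral_congr fun x => (sq_eq_rpow_two _).symm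

lemma lint_sq_ne_top {κ : Measure ℝ} {g : ℝ → ℂ} (h : MemLp g 2 κ) :
    ∫⁻ x, ((‖g x‖₊ : ℝ≥0∞)) ^ 2 ∂κ ≠ ⊤ := by
  have h2 := h.2
  rw [eLpNorm_two_eq] at h2
  exact ((ENNReal.rpow_lt_top_iff_of_pos (by norm_num)).mp h2).ne

lemma four_mul_rpow (K X : ℝ≥0∞) : (4 * K ^ 2 * X) ^ (1/2:ℝ) = 2 * K * X ^ (1/2:ℝ) := by
  rw [ENNReal.mul_rpow_of_nonneg _ _ (by norm_num : (0:ℝ) ≤ 1/2),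
    ENNReal.mul_rpow_of_nonneg _ _ (by norm_num : (0:ℝ) ≤ 1/2)]
  congr 2
  · rw [show (4:ℝ≥0∞) = 2 ^ 2 by norm_num, sq_eq_rpow_two, ← ENNReal.rpow_mul]
    norm_num
  · rw [sq_eq_rpow_two, ← ENNReal.rpow_mul]
    norm_num

lemma aesm_of_loc (μ : Measure ℝ) {s : Set ℝ} (hso : IsOpen s)
    (hconv : ∀ ⦃p q x : ℝ⦄, p ∈ s → q ∈ s → p ≤ x → x ≤ q → x ∈ s) (g : ℝ → ℂ)
    (h : ∀ α ∈ s, ∀ β ∈ s, AEStronglyMeasurable g (μ.restrict (Icc α β))) :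
    AEStronglyMeasurable g (μ.restrict s) := by
  have hcover : s = ⋃ p : {p : ℚ × ℚ // ((p.1 : ℝ) ∈ s ∧ ((p.2 : ℝ)) ∈ s)},
      Icc (↑p.val.1 : ℝ) (↑p.val.2 : ℝ) := by
    ext x
    constructor
    · intro hx
      obtain ⟨ε, hε, hball⟩ := Metric.isOpen_iff.mp hso x hx
      obtain ⟨q1, hq1, hq1'⟩ := exists_rat_btwn (show x - ε < x by linarith)
      obtain ⟨q2, hq2, hq2'⟩ := exists_rat_btwn (show x < x + ε by linarith)
      have hq1s : (q1 : ℝ) ∈ s := hball (by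
        rw [Metric.mem_ball, Real.dist_eq, abs_lt]; constructor <;> linarith)
      have hq2s : (q2 : ℝ) ∈ s := hball (by
        rw [Metric.mem_ball, Real.dist_eq, abs_lt]; constructor <;> linarith)
      exact mem_iUnion.mpr ⟨⟨(q1, q2), hq1s, hq2s⟩, ⟨hq1'.le, hq2.le⟩⟩
    · intro hx
      obtain ⟨p, hp⟩ := mem_iUnion.mp hx
      exact hconv p.2.1 p.2.2 hp.1 hp.2
  rw [hcover, aestronglyMeasurable_iUnion_iff]
  rintro ⟨⟨q1, q2⟩, h1, h2⟩
  exact h _ h1 _ h2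
end CE

/-- the open interval `(a,b)` of the real line, bounded or unbounded
(`a`, `b` are extended reals). -/
def ceSet (a b : EReal) : Set ℝ := {x : ℝ | a < (x : EReal) ∧ (x : EReal) < b}

/-- the weighted measure `w(x) dx`. -/
def wMeasure (w : ℝ → ℝ) : Measure ℝ :=
  volume.withDensity (fun x => ENNReal.ofReal (w x))

/-- membership in `L²((a,b); w)`. -/
def MemL2w (s : Set ℝ) (w : ℝ → ℝ) (f : ℝ → ℂ) : Prop :=
  MemLp f 2 ((wMeasure w).restrict s)

/-- the `L²((a,b); w)`-norm. -/
def l2wNorm (s : Set ℝ) (w : ℝ → ℝ) (f : ℝ → ℂ) : ℝ≥0∞ :=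
  eLpNorm f 2 ((wMeasure w).restrict s)

/-- the operator `(Af)(x) = φ(x) ∫_x^b ψ(t) f(t) w(t) dt`. -/
def ceA (s : Set ℝ) (w : ℝ → ℝ) (φ ψ f : ℝ → ℂ) (x : ℝ) : ℂ :=
  φ x * ∫ t in s ∩ Ici x, ψ t * f t ∂(wMeasure w)

/-- the operator `(Bf)(x) = ψ(x) ∫_a^x φ(t) f(t) w(t) dt`. -/
def ceB (s : Set ℝ) (w : ℝ → ℝ) (φ ψ f : ℝ → ℂ) (x : ℝ) : ℂ :=
  ψ x * ∫ t in s ∩ Iic x, φ t * f t ∂(wMeasure w)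

/-- `K(x) = (∫_a^x |φ|² w dt)^{1/2} (∫_x^b |ψ|² w dt)^{1/2}`, valued in `[0,∞]`. -/
def ceK (s : Set ℝ) (w : ℝ → ℝ) (φ ψ : ℝ → ℂ) (x : ℝ) : ℝ≥0∞ :=
  (∫⁻ t in s ∩ Iic x, (‖φ t‖₊ : ℝ≥0∞) ^ 2 ∂(wMeasure w)) ^ (1/2 : ℝ) *
    (∫⁻ t in s ∩ Ici x, (‖ψ t‖₊ : ℝ≥0∞) ^ 2 ∂(wMeasure w)) ^ (1/2 : ℝ)

/-- `K = sup {K(x) : x ∈ (a,b)}`. -/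
def ceKsup (s : Set ℝ) (w : ℝ → ℝ) (φ ψ : ℝ → ℂ) : ℝ≥0∞ :=
  ⨆ x ∈ s, ceK s w φ ψ x

/-- `T` is a bounded operator from `L²((a,b); w)` into itself. -/
def BoundedL2w (s : Set ℝ) (w : ℝ → ℝ) (T : (ℝ → ℂ) → (ℝ → ℂ)) : Prop :=
  ∃ M : ℝ≥0∞, M < ⊤ ∧ ∀ f : ℝ → ℂ, MemL2w s w f →
    MemL2w s w (T f) ∧ l2wNorm s w (T f) ≤ M * l2wNorm s w f

/-- **The Chisholm–Everitt Theorem.** Let `(a,b)` be an open interval (bounded or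
unbounded), `w` measurable and positive a.e. on `(a,b)`, and `φ, ψ : (a,b) → ℂ`
satisfy: (i) `φ, ψ ∈ L²_loc((a,b); w)`; (ii) `φ ∈ L²((a,c]; w)` and
`ψ ∈ L²([c,b); w)` for some `c ∈ (a,b)`; (iii) neither `φ` nor `ψ` vanishes a.e.
on any compact subinterval `[α,β] ⊂ (a,b)`. Then the operators
`(Af)(x) = φ(x)∫_x^b ψ f w dt` and `(Bf)(x) = ψ(x)∫_a^x φ f w dt` are both bounded
on `L²((a,b); w)` if and only if `0 < K < ∞`, where `K = sup_x K(x)`; moreover in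
that case `‖Af‖ ≤ 2K‖f‖` and `‖Bg‖ ≤ 2K‖g‖` for all `f, g ∈ L²((a,b); w)`. -/
theorem chisholm_everitt (a b : EReal) (hab : a < b) (w : ℝ → ℝ) (φ ψ : ℝ → ℂ)
    (hw : Measurable w)
    (hwpos : ∀ᵐ x ∂(volume.restrict (ceSet a b)), 0 < w x)
    (hloc : ∀ α ∈ ceSet a b, ∀ β ∈ ceSet a b,
      MemLp φ 2 ((wMeasure w).restrict (Icc α β)) ∧
      MemLp ψ 2 ((wMeasure w).restrict (Icc α β)))
    (hends : ∃ c ∈ ceSet a b,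
      MemLp φ 2 ((wMeasure w).restrict (ceSet a b ∩ Iic c)) ∧
      MemLp ψ 2 ((wMeasure w).restrict (ceSet a b ∩ Ici c)))
    (hpos : ∀ α ∈ ceSet a b, ∀ β ∈ ceSet a b, α < β →
      (0 < ∫⁻ t in Icc α β, (‖φ t‖₊ : ℝ≥0∞) ^ 2 ∂(wMeasure w)) ∧
      (0 < ∫⁻ t in Icc α β, (‖ψ t‖₊ : ℝ≥0∞) ^ 2 ∂(wMeasure w))) :
    ((BoundedL2w (ceSet a b) w (ceA (ceSet a b) w φ ψ) ∧
        BoundedL2w (ceSet a b) w (ceB (ceSet a b) w φ ψ)) ↔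
      (0 < ceKsup (ceSet a b) w φ ψ ∧ ceKsup (ceSet a b) w φ ψ < ⊤)) ∧
    (ceKsup (ceSet a b) w φ ψ < ⊤ →
      ∀ f : ℝ → ℂ, MemL2w (ceSet a b) w f →
        l2wNorm (ceSet a b) w (ceA (ceSet a b) w φ ψ f)
            ≤ 2 * ceKsup (ceSet a b) w φ ψ * l2wNorm (ceSet a b) w f ∧
        l2wNorm (ceSet a b) w (ceB (ceSet a b) w φ ψ f)
            ≤ 2 * ceKsup (ceSet a b) w φ ψ * l2wNorm (ceSet a b) w f) := by
  classical
  set s : Set ℝ := ceSet a b with hsdef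
  set μ : Measure ℝ := wMeasure w with hμdef
  haveI : SFinite μ := by rw [hμdef]; unfold wMeasure; infer_instance
  obtain ⟨c, hc, hφc, hψc⟩ := hends
  have hsopen : IsOpen s := by
    have h1 : s = ((↑) : ℝ → EReal) ⁻¹' (Ioi a ∩ Iio b) := by
      rw [hsdef]; ext x; simp [ceSet]
    rw [h1]
    exact (isOpen_Ioi.inter isOpen_Iio).preimage continuous_coe_real_ereal
  have hsmeas : MeasurableSet s := hsopen.measurableSet
  have hconv : ∀ ⦃p q x : ℝ⦄, p ∈ s → q ∈ s → p ≤ x → x ≤ q → x ∈ s := by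
    intro p q x hp hq h1 h2
    exact ⟨lt_of_lt_of_le hp.1 (by exact_mod_cast h1),
      lt_of_le_of_lt (by exact_mod_cast h2 : (x : EReal) ≤ (q : EReal)) hq.2⟩
  have hlower : ∀ x ∈ s, ∃ α ∈ s, α < x := by
    intro x hx
    obtain ⟨ε, hε, hball⟩ := Metric.isOpen_iff.mp hsopen x hx
    refine ⟨x - ε/2, hball ?_, by linarith⟩
    rw [Metric.mem_ball, Real.dist_eq, abs_lt]
    constructor <;> linarith
  have hupper : ∀ x ∈ s, ∃ β ∈ s, x < β := by
    intro x hx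
    obtain ⟨ε, hε, hball⟩ := Metric.isOpen_iff.mp hsopen x hx
    refine ⟨x + ε/2, hball ?_, by linarith⟩
    rw [Metric.mem_ball, Real.dist_eq, abs_lt]
    constructor <;> linarith
  have hφm : AEStronglyMeasurable φ (μ.restrict s) :=
    CE.aesm_of_loc μ hsopen hconv φ (fun α hα β hβ => ((hloc α hα β hβ).1).1)
  have hψm : AEStronglyMeasurable ψ (μ.restrict s) :=
    CE.aesm_of_loc μ hsopen hconv ψ (fun α hα β hβ => ((hloc α hα β hβ).2).1)
  have hΦfin : ∀ x ∈ s, ∫⁻ t in s ∩ Iic x, (‖φ t‖₊ : ℝ≥0∞) ^ 2 ∂μ ≠ ⊤ := by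
    intro x hx
    rcases le_or_gt x c with hxc | hcx
    · exact ne_top_of_le_ne_top (CE.lint_sq_ne_top hφc)
        (lintegral_mono_set (inter_subset_inter_right _ (Iic_subset_Iic.mpr hxc)))
    · have hsub : s ∩ Iic x ⊆ (s ∩ Iic c) ∪ Icc c x := by
        rintro t ⟨hts, htx⟩
        rcases le_or_gt t c with h | h
        · exact Or.inl ⟨hts, h⟩
        · exact Or.inr ⟨h.le, htx⟩
      refine ne_top_of_le_ne_top ?_ (lintegral_mono_set hsub)
      refine ne_top_of_le_ne_top ?_ (lintegral_union_le _ _ _)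
      exact ENNReal.add_ne_top.mpr
        ⟨CE.lint_sq_ne_top hφc, CE.lint_sq_ne_top ((hloc c hc x hx).1)⟩
  have hΨfin : ∀ x ∈ s, ∫⁻ t in s ∩ Ici x, (‖ψ t‖₊ : ℝ≥0∞) ^ 2 ∂μ ≠ ⊤ := by
    intro x hx
    rcases le_or_gt c x with hcx | hxc
    · exact ne_top_of_le_ne_top (CE.lint_sq_ne_top hψc)
        (lintegral_mono_set (inter_subset_inter_right _ (Ici_subset_Ici.mpr hcx)))
    · have hsub : s ∩ Ici x ⊆ (s ∩ Ici c) ∪ Icc x c := by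
        rintro t ⟨hts, htx⟩
        rcases le_or_gt c t with h | h
        · exact Or.inl ⟨hts, h⟩
        · exact Or.inr ⟨htx, h.le⟩
      refine ne_top_of_le_ne_top ?_ (lintegral_mono_set hsub)
      refine ne_top_of_le_ne_top ?_ (lintegral_union_le _ _ _)
      exact ENNReal.add_ne_top.mpr
        ⟨CE.lint_sq_ne_top hψc, CE.lint_sq_ne_top ((hloc x hx c hc).2)⟩
  have hΦpos : ∀ x ∈ s, 0 < ∫⁻ t in s ∩ Iic x, (‖φ t‖₊ : ℝ≥0∞) ^ 2 ∂μ := by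
    intro x hx
    obtain ⟨α, hαs, hαx⟩ := hlower x hx
    have hsub : Icc α x ⊆ s ∩ Iic x := fun t ht => ⟨hconv hαs hx ht.1 ht.2, ht.2⟩
    exact lt_of_lt_of_le ((hpos α hαs x hx hαx).1) (lintegral_mono_set hsub)
  have hΨpos : ∀ x ∈ s, 0 < ∫⁻ t in s ∩ Ici x, (‖ψ t‖₊ : ℝ≥0∞) ^ 2 ∂μ := by
    intro x hx
    obtain ⟨β, hβs, hxβ⟩ := hupper x hx
    have hsub : Icc x β ⊆ s ∩ Ici x := fun t ht => ⟨hconv hx hβs ht.1 ht.2, ht.1⟩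
    exact lt_of_lt_of_le ((hpos x hx β hβs hxβ).2) (lintegral_mono_set hsub)
  have hKx : ∀ x ∈ s, (∫⁻ t in s ∩ Iic x, (‖φ t‖₊ : ℝ≥0∞) ^ 2 ∂μ) ^ (1/2:ℝ) *
      (∫⁻ t in s ∩ Ici x, (‖ψ t‖₊ : ℝ≥0∞) ^ 2 ∂μ) ^ (1/2:ℝ) ≤ ceKsup s w φ ψ := by
    intro x hx
    have h1 : ceK s w φ ψ x ≤ ceKsup s w φ ψ :=
      le_iSup₂ (f := fun x _ => ceK s w φ ψ x) x hx
    simpa [ceK, ← hμdef] using h1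
  have hKpos : 0 < ceKsup s w φ ψ := by
    have hck : 0 < ceK s w φ ψ c := by
      have h1 := hΦpos c hc
      have h2 := hΨpos c hc
      have e : ceK s w φ ψ c = (∫⁻ t in s ∩ Iic c, (‖φ t‖₊ : ℝ≥0∞) ^ 2 ∂μ) ^ (1/2:ℝ) *
          (∫⁻ t in s ∩ Ici c, (‖ψ t‖₊ : ℝ≥0∞) ^ 2 ∂μ) ^ (1/2:ℝ) := by
        simp [ceK, ← hμdef]
      rw [e]
      refine ENNReal.mul_pos ?_ ?_
      · simp [ENNReal.rpow_eq_zero_iff, h1.ne']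
      · simp [ENNReal.rpow_eq_zero_iff, h2.ne']
    exact lt_of_lt_of_le hck (le_iSup₂ (f := fun x _ => ceK s w φ ψ x) c hc)
  -- the main quantitative bound
  have main : ceKsup s w φ ψ ≠ ⊤ → ∀ f : ℝ → ℂ, MemL2w s w f →
      (MemL2w s w (ceA s w φ ψ f) ∧
        l2wNorm s w (ceA s w φ ψ f) ≤ 2 * ceKsup s w φ ψ * l2wNorm s w f) ∧
      (MemL2w s w (ceB s w φ ψ f) ∧
        l2wNorm s w (ceB s w φ ψ f) ≤ 2 * ceKsup s w φ ψ * l2wNorm s w f) := by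
    intro hKtop f hf
    have hfm : AEStronglyMeasurable f (μ.restrict s) := hf.1
    set K : ℝ≥0∞ := ceKsup s w φ ψ with hKdef
    set φ₀ : ℝ → ℂ := hφm.mk φ with hφ₀def
    have hφ₀ : StronglyMeasurable φ₀ := hφm.stronglyMeasurable_mk
    have hφe : φ =ᵐ[μ.restrict s] φ₀ := hφm.ae_eq_mk
    set ψ₀ : ℝ → ℂ := hψm.mk ψ with hψ₀def
    have hψ₀ : StronglyMeasurable ψ₀ := hψm.stronglyMeasurable_mk
    have hψe : ψ =ᵐ[μ.restrict s] ψ₀ := hψm.ae_eq_mk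
    set f₀ : ℝ → ℂ := hfm.mk f with hf₀def
    have hf₀ : StronglyMeasurable f₀ := hfm.stronglyMeasurable_mk
    have hfe : f =ᵐ[μ.restrict s] f₀ := hfm.ae_eq_mk
    have hprodB : ∀ x : ℝ, ∫ t in s ∩ Iic x, φ t * f t ∂μ
        = ∫ t in s ∩ Iic x, φ₀ t * f₀ t ∂μ := fun x =>
      integral_congr_ae (ae_restrict_of_ae_restrict_of_subset inter_subset_left (hφe.mul hfe))
    have hprodA : ∀ x : ℝ, ∫ t in s ∩ Ici x, ψ t * f t ∂μ
        = ∫ t in s ∩ Ici x, ψ₀ t * f₀ t ∂μ := fun x =>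
      integral_congr_ae (ae_restrict_of_ae_restrict_of_subset inter_subset_left (hψe.mul hfe))
    have hΦeq : ∀ x, ∫⁻ t in s ∩ Iic x, (‖φ₀ t‖₊ : ℝ≥0∞) ^ 2 ∂μ
        = ∫⁻ t in s ∩ Iic x, (‖φ t‖₊ : ℝ≥0∞) ^ 2 ∂μ := by
      intro x
      refine lintegral_congr_ae ?_
      filter_upwards [ae_restrict_of_ae_restrict_of_subset inter_subset_left hφe] with t ht
      rw [ht]
    have hΨeq : ∀ x, ∫⁻ t in s ∩ Ici x, (‖ψ₀ t‖₊ : ℝ≥0∞) ^ 2 ∂μ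
        = ∫⁻ t in s ∩ Ici x, (‖ψ t‖₊ : ℝ≥0∞) ^ 2 ∂μ := by
      intro x
      refine lintegral_congr_ae ?_
      filter_upwards [ae_restrict_of_ae_restrict_of_subset inter_subset_left hψe] with t ht
      rw [ht]
    have hfeq2 : ∫⁻ x in s, (‖f₀ x‖₊ : ℝ≥0∞) ^ 2 ∂μ
        = ∫⁻ x in s, (‖f x‖₊ : ℝ≥0∞) ^ 2 ∂μ := by
      refine lintegral_congr_ae ?_
      filter_upwards [hfe] with t ht
      rw [ht]
    have hΦpos₀ : ∀ x ∈ s, 0 < ∫⁻ t in s ∩ Iic x, (‖φ₀ t‖₊ : ℝ≥0∞) ^ 2 ∂μ :=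
      fun x hx => by rw [hΦeq x]; exact hΦpos x hx
    have hΦfin₀ : ∀ x ∈ s, ∫⁻ t in s ∩ Iic x, (‖φ₀ t‖₊ : ℝ≥0∞) ^ 2 ∂μ ≠ ⊤ :=
      fun x hx => by rw [hΦeq x]; exact hΦfin x hx
    have hΨpos₀ : ∀ x ∈ s, 0 < ∫⁻ t in s ∩ Ici x, (‖ψ₀ t‖₊ : ℝ≥0∞) ^ 2 ∂μ :=
      fun x hx => by rw [hΨeq x]; exact hΨpos x hx
    have hΨfin₀ : ∀ x ∈ s, ∫⁻ t in s ∩ Ici x, (‖ψ₀ t‖₊ : ℝ≥0∞) ^ 2 ∂μ ≠ ⊤ :=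
      fun x hx => by rw [hΨeq x]; exact hΨfin x hx
    have hK₀ : ∀ x ∈ s, (∫⁻ t in s ∩ Iic x, (‖φ₀ t‖₊ : ℝ≥0∞) ^ 2 ∂μ) ^ (1/2:ℝ) *
        (∫⁻ t in s ∩ Ici x, (‖ψ₀ t‖₊ : ℝ≥0∞) ^ 2 ∂μ) ^ (1/2:ℝ) ≤ K :=
      fun x hx => by rw [hΦeq x, hΨeq x]; exact hKx x hx
    have hcoreB := CE.coreB μ hsmeas φ₀ ψ₀ f₀ hφ₀.measurable hψ₀.measurable
      hf₀.measurable K hKtop hΦpos₀ hΦfin₀ hΨpos₀ hΨfin₀ hK₀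
    have hcoreA := CE.coreA μ hsmeas φ₀ ψ₀ f₀ hφ₀.measurable hψ₀.measurable
      hf₀.measurable K hKtop hΦpos₀ hΦfin₀ hΨpos₀ hΨfin₀ hK₀
    have hnf : l2wNorm s w f = (∫⁻ x in s, (‖f x‖₊ : ℝ≥0∞) ^ 2 ∂μ) ^ (1/2:ℝ) := by
      simp only [l2wNorm, ← hμdef]
      exact CE.eLpNorm_two_eq _ _
    -- measurability of the image functions
    have hBm : AEStronglyMeasurable (ceB s w φ ψ f) (μ.restrict s) := by
      have hset : MeasurableSet {p : ℝ × ℝ | p.2 ∈ s ∧ p.2 ≤ p.1} :=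
        (measurable_snd hsmeas).inter (measurableSet_le measurable_snd measurable_fst)
      have hFm : StronglyMeasurable
          (fun p : ℝ × ℝ => ({p : ℝ × ℝ | p.2 ∈ s ∧ p.2 ≤ p.1}).indicator
            (fun q => φ₀ q.2 * f₀ q.2) p) :=
        (((hφ₀.measurable.comp measurable_snd).mul
          (hf₀.measurable.comp measurable_snd)).indicator hset).stronglyMeasurable
      have hH := StronglyMeasurable.integral_prod_right' (ν := μ) hFm
      have heq : (fun x => ∫ t, ({p : ℝ × ℝ | p.2 ∈ s ∧ p.2 ≤ p.1}).indicator
          (fun q => φ₀ q.2 * f₀ q.2) (x, t) ∂μ)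
          = fun x => ∫ t in s ∩ Iic x, φ₀ t * f₀ t ∂μ := by
        funext x
        have h1 : (fun t => ({p : ℝ × ℝ | p.2 ∈ s ∧ p.2 ≤ p.1}).indicator
            (fun q => φ₀ q.2 * f₀ q.2) (x, t))
            = (s ∩ Iic x).indicator (fun t => φ₀ t * f₀ t) := by
          ext t
          by_cases h : t ∈ s ∧ t ≤ x <;>
            simp [Set.indicator_apply, mem_inter_iff, mem_Iic, mem_setOf_eq, h]
        rw [h1, integral_indicator (hsmeas.inter measurableSet_Iic)]
      rw [heq] at hH
      have hBfun : ceB s w φ ψ f = fun x => ψ x * ∫ t in s ∩ Iic x, φ₀ t * f₀ t ∂μ := by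
        funext x
        simp only [ceB, ← hμdef]
        rw [hprodB x]
      rw [hBfun]
      exact hψm.mul hH.aestronglyMeasurable
    have hAm : AEStronglyMeasurable (ceA s w φ ψ f) (μ.restrict s) := by
      have hset : MeasurableSet {p : ℝ × ℝ | p.2 ∈ s ∧ p.1 ≤ p.2} :=
        (measurable_snd hsmeas).inter (measurableSet_le measurable_fst measurable_snd)
      have hFm : StronglyMeasurable
          (fun p : ℝ × ℝ => ({p : ℝ × ℝ | p.2 ∈ s ∧ p.1 ≤ p.2}).indicator
            (fun q => ψ₀ q.2 * f₀ q.2) p) :=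
        (((hψ₀.measurable.comp measurable_snd).mul
          (hf₀.measurable.comp measurable_snd)).indicator hset).stronglyMeasurable
      have hH := StronglyMeasurable.integral_prod_right' (ν := μ) hFm
      have heq : (fun x => ∫ t, ({p : ℝ × ℝ | p.2 ∈ s ∧ p.1 ≤ p.2}).indicator
          (fun q => ψ₀ q.2 * f₀ q.2) (x, t) ∂μ)
          = fun x => ∫ t in s ∩ Ici x, ψ₀ t * f₀ t ∂μ := by
        funext x
        have h1 : (fun t => ({p : ℝ × ℝ | p.2 ∈ s ∧ p.1 ≤ p.2}).indicator
            (fun q => ψ₀ q.2 * f₀ q.2) (x, t))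
            = (s ∩ Ici x).indicator (fun t => ψ₀ t * f₀ t) := by
          ext t
          by_cases h : t ∈ s ∧ x ≤ t <;>
            simp [Set.indicator_apply, mem_inter_iff, mem_Ici, mem_setOf_eq, h]
        rw [h1, integral_indicator (hsmeas.inter measurableSet_Ici)]
      rw [heq] at hH
      have hAfun : ceA s w φ ψ f = fun x => φ x * ∫ t in s ∩ Ici x, ψ₀ t * f₀ t ∂μ := by
        funext x
        simp only [ceA, ← hμdef]
        rw [hprodA x]
      rw [hAfun]
      exact hφm.mul hH.aestronglyMeasurable
    -- norm bounds
    have hBnorm_eq : l2wNorm s w (ceB s w φ ψ f)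
        = (∫⁻ x in s, (‖ψ₀ x‖₊ : ℝ≥0∞) ^ 2 *
            (‖∫ t in s ∩ Iic x, φ₀ t * f₀ t ∂μ‖₊ : ℝ≥0∞) ^ 2 ∂μ) ^ (1/2:ℝ) := by
      simp only [l2wNorm, ← hμdef]
      rw [CE.eLpNorm_two_eq]
      congr 1
      refine lintegral_congr_ae ?_
      filter_upwards [hψe] with x hx
      simp only [ceB, ← hμdef]
      rw [hprodB x, hx, nnnorm_mul, ENNReal.coe_mul, mul_pow]
    have hAnorm_eq : l2wNorm s w (ceA s w φ ψ f)
        = (∫⁻ x in s, (‖φ₀ x‖₊ : ℝ≥0∞) ^ 2 *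
            (‖∫ t in s ∩ Ici x, ψ₀ t * f₀ t ∂μ‖₊ : ℝ≥0∞) ^ 2 ∂μ) ^ (1/2:ℝ) := by
      simp only [l2wNorm, ← hμdef]
      rw [CE.eLpNorm_two_eq]
      congr 1
      refine lintegral_congr_ae ?_
      filter_upwards [hφe] with x hx
      simp only [ceA, ← hμdef]
      rw [hprodA x, hx, nnnorm_mul, ENNReal.coe_mul, mul_pow]
    have hBle : l2wNorm s w (ceB s w φ ψ f) ≤ 2 * K * l2wNorm s w f := by
      rw [hBnorm_eq, hnf, ← CE.four_mul_rpow K]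
      refine ENNReal.rpow_le_rpow ?_ (by norm_num)
      rw [← hfeq2]
      exact hcoreB
    have hAle : l2wNorm s w (ceA s w φ ψ f) ≤ 2 * K * l2wNorm s w f := by
      rw [hAnorm_eq, hnf, ← CE.four_mul_rpow K]
      refine ENNReal.rpow_le_rpow ?_ (by norm_num)
      rw [← hfeq2]
      exact hcoreA
    have hfin2 : l2wNorm s w f ≠ ⊤ := hf.2.ne
    have h2Kfin : (2 : ℝ≥0∞) * K ≠ ⊤ := ENNReal.mul_ne_top (by norm_num) hKtop
    have hrhsfin : 2 * K * l2wNorm s w f < ⊤ :=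
      ENNReal.mul_lt_top (lt_top_iff_ne_top.mpr h2Kfin) (lt_top_iff_ne_top.mpr hfin2)
    exact ⟨⟨⟨hAm, lt_of_le_of_lt hAle hrhsfin⟩, hAle⟩,
      ⟨⟨hBm, lt_of_le_of_lt hBle hrhsfin⟩, hBle⟩⟩
  -- converse : boundedness of B forces K < ⊤
  have conv : BoundedL2w s w (ceB s w φ ψ) → ceKsup s w φ ψ < ⊤ := by
    rintro ⟨M, hMlt, hM⟩
    have hKM : ceKsup s w φ ψ ≤ M := by
      rw [ceKsup]
      refine iSup₂_le fun x hx => ?_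
      set Φx : ℝ≥0∞ := ∫⁻ t in s ∩ Iic x, (‖φ t‖₊ : ℝ≥0∞) ^ 2 ∂μ with hΦxdef
      set Ψx : ℝ≥0∞ := ∫⁻ t in s ∩ Ici x, (‖ψ t‖₊ : ℝ≥0∞) ^ 2 ∂μ with hΨxdef
      have hΦx0 : Φx ≠ 0 := (hΦpos x hx).ne'
      have hΦxt : Φx ≠ ⊤ := hΦfin x hx
      have hEm : MeasurableSet (s ∩ Iic x) := hsmeas.inter measurableSet_Iic
      set Fx : ℝ → ℂ := (s ∩ Iic x).indicator (fun t => star (φ t)) with hFxdef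
      have hconjm : AEStronglyMeasurable (fun t => star (φ t)) (μ.restrict s) :=
        continuous_star.comp_aestronglyMeasurable hφm
      have hFxm : AEStronglyMeasurable Fx (μ.restrict s) := hconjm.indicator hEm
      have hFxsq : ∀ t, (‖Fx t‖₊ : ℝ≥0∞) ^ 2
          = (s ∩ Iic x).indicator (fun t => (‖φ t‖₊ : ℝ≥0∞) ^ 2) t := by
        intro t
        by_cases h : t ∈ s ∩ Iic x <;>
          simp [hFxdef, Set.indicator_apply, h]
      have hFxnorm : l2wNorm s w Fx = Φx ^ (1/2:ℝ) := by
        simp only [l2wNorm, ← hμdef]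
        rw [CE.eLpNorm_two_eq]
        congr 1
        have hss : s ∩ Iic x ∩ s = s ∩ Iic x := by
          ext t; simp only [mem_inter_iff, mem_Iic]; tauto
        rw [lintegral_congr hFxsq, lintegral_indicator hEm,
          Measure.restrict_restrict hEm, hss, hΦxdef]
      have hFxmem : MemL2w s w Fx := by
        refine ⟨hFxm, ?_⟩
        have : eLpNorm Fx 2 (μ.restrict s) = Φx ^ (1/2:ℝ) := hFxnorm
        rw [this]
        exact (ENNReal.rpow_lt_top_iff_of_pos (by norm_num)).mpr (lt_top_iff_ne_top.mpr hΦxt)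
      obtain ⟨-, hble⟩ := hM Fx hFxmem
      set cst : ℝ := Φx.toReal with hcstdef
      have hcst : ENNReal.ofReal cst = Φx := ENNReal.ofReal_toReal hΦxt
      have hinner : ∀ y, x ≤ y → ∫ t in s ∩ Iic y, φ t * Fx t ∂μ = (cst : ℂ) := by
        intro y hxy
        have h1 : (fun t => φ t * Fx t)
            = (s ∩ Iic x).indicator (fun t => ((‖φ t‖ ^ 2 : ℝ) : ℂ)) := by
          funext t
          by_cases h : t ∈ s ∩ Iic x
          · simp only [hFxdef, indicator_of_mem h]
            rw [← starRingEnd_apply, Complex.mul_conj]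
            norm_cast
            rw [Complex.normSq_eq_norm_sq]
          · simp [hFxdef, indicator_of_notMem h]
        rw [h1, integral_indicator hEm, Measure.restrict_restrict hEm]
        have hseteq : (s ∩ Iic x) ∩ (s ∩ Iic y) = s ∩ Iic x := by
          ext t
          simp only [mem_inter_iff, mem_Iic]
          constructor
          · exact fun h => h.1
          · exact fun h => ⟨h, h.1, le_trans h.2 hxy⟩
        rw [hseteq]
        have hsm2 : AEStronglyMeasurable (fun t => ‖φ t‖ ^ 2)
            (μ.restrict (s ∩ Iic x)) := by
          have hφsub : AEStronglyMeasurable φ (μ.restrict (s ∩ Iic x)) :=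
            hφm.mono_measure (Measure.restrict_mono inter_subset_left le_rfl)
          exact (continuous_pow 2).comp_aestronglyMeasurable hφsub.norm
        have h2 : ∫ t in s ∩ Iic x, ‖φ t‖ ^ 2 ∂μ = cst := by
          rw [integral_eq_lintegral_of_nonneg_ae
            (ae_of_all _ fun t => by positivity) hsm2, hcstdef, hΦxdef]
          congr 1
          refine lintegral_congr fun t => ?_
          rw [ENNReal.ofReal_pow (norm_nonneg _), ofReal_norm]; rfl
        rw [← h2]
        exact integral_ofReal
      have hlow : Φx * Ψx ^ (1/2:ℝ) ≤ l2wNorm s w (ceB s w φ ψ Fx) := by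
        have e0 : l2wNorm s w (ceB s w φ ψ Fx)
            = (∫⁻ y in s, (‖ceB s w φ ψ Fx y‖₊ : ℝ≥0∞) ^ 2 ∂μ) ^ (1/2:ℝ) := by
          simp only [l2wNorm, ← hμdef]
          exact CE.eLpNorm_two_eq _ _
        rw [e0]
        have hval : ∫⁻ y in s ∩ Ici x, (‖ceB s w φ ψ Fx y‖₊ : ℝ≥0∞) ^ 2 ∂μ
            = Φx ^ 2 * Ψx := by
          have hptwise : ∀ y ∈ s ∩ Ici x, (‖ceB s w φ ψ Fx y‖₊ : ℝ≥0∞) ^ 2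
              = Φx ^ 2 * (‖ψ y‖₊ : ℝ≥0∞) ^ 2 := by
            intro y hy
            have hc : (‖(cst : ℂ)‖₊ : ℝ≥0∞) = Φx := by
              rw [Complex.nnnorm_real, ← hcst]
              exact (Real.enorm_eq_ofReal ENNReal.toReal_nonneg)
            simp only [ceB, ← hμdef]
            rw [hinner y hy.2, nnnorm_mul, ENNReal.coe_mul, mul_pow, hc, mul_comm]
          rw [setLIntegral_congr_fun (hsmeas.inter measurableSet_Ici)
            hptwise]
          rw [lintegral_const_mul' _ _ (ENNReal.pow_ne_top hΦxt), hΨxdef]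
        calc Φx * Ψx ^ (1/2:ℝ) = (Φx ^ 2 * Ψx) ^ (1/2:ℝ) := by
              rw [ENNReal.mul_rpow_of_nonneg _ _ (by norm_num : (0:ℝ) ≤ 1/2),
                CE.sq_eq_rpow_two, ← ENNReal.rpow_mul]
              norm_num
          _ ≤ (∫⁻ y in s, (‖ceB s w φ ψ Fx y‖₊ : ℝ≥0∞) ^ 2 ∂μ) ^ (1/2:ℝ) := by
              rw [← hval]
              exact ENNReal.rpow_le_rpow (lintegral_mono_set inter_subset_left) (by norm_num)
      have hfinal : Φx * Ψx ^ (1/2:ℝ) ≤ M * Φx ^ (1/2:ℝ) := by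
        refine le_trans hlow (le_trans hble ?_)
        rw [hFxnorm]
      have hsplit : Φx = Φx ^ (1/2:ℝ) * Φx ^ (1/2:ℝ) := by
        rw [← ENNReal.rpow_add _ _ hΦx0 hΦxt]
        norm_num
      have hhalf0 : Φx ^ (1/2:ℝ) ≠ 0 := by
        simp [ENNReal.rpow_eq_zero_iff, hΦx0, hΦxt]
      have hhalft : Φx ^ (1/2:ℝ) ≠ ⊤ := by
        simp [ENNReal.rpow_eq_top_iff, hΦx0, hΦxt]
      have : ceK s w φ ψ x = Φx ^ (1/2:ℝ) * Ψx ^ (1/2:ℝ) := by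
        simp [ceK, ← hμdef, hΦxdef, hΨxdef]
      rw [this, ← ENNReal.mul_le_mul_iff_left hhalf0 hhalft]
      calc Φx ^ (1/2:ℝ) * Ψx ^ (1/2:ℝ) * Φx ^ (1/2:ℝ)
          = Φx ^ (1/2:ℝ) * Φx ^ (1/2:ℝ) * Ψx ^ (1/2:ℝ) := by ring
        _ = Φx * Ψx ^ (1/2:ℝ) := by rw [← hsplit]
        _ ≤ M * Φx ^ (1/2:ℝ) := hfinal
    exact lt_of_le_of_lt hKM hMlt
  -- assembly
  constructor
  · constructor
    · rintro ⟨hA, hB⟩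
      exact ⟨hKpos, conv hB⟩
    · rintro ⟨-, hKlt⟩
      have h2K : (2 : ℝ≥0∞) * ceKsup s w φ ψ < ⊤ :=
        ENNReal.mul_lt_top (by norm_num) hKlt
      exact ⟨⟨2 * ceKsup s w φ ψ, h2K, fun f hf => (main hKlt.ne f hf).1⟩,
        ⟨2 * ceKsup s w φ ψ, h2K, fun f hf => (main hKlt.ne f hf).2⟩⟩
  · intro hlt f hf
    exact ⟨((main hlt.ne f hf).1).2, ((main hlt.ne f hf).2).2⟩
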